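/- arXiv:2402.04496 — 5 statements merged into one kernel-verified Lean document; each statement's English description precedes it below -/
import Mathlib

section
/- Let E be a Banach space. If (x_j)_{j=1}^∞ is a weakly 1-summable sequence in E and (α_j)_{j=1}^∞ ∈ c_0 (a null scalar sequence), then the series ∑_{j=1}^∞ α_j x_j converges in E and ‖∑_{j=1}^∞ α_j x_j‖ ≤ sup_j |α_j| · ‖(x_j)‖_{w,1}. -/
open Filter Topology
open scoped ENNReal NNReal

/-- The weak `ℓ_p` "norm" of a Banach-space valued sequence, valued in `ℝ≥0∞`:
`sup_{‖φ‖ ≤ 1} (∑_j |φ(x_j)|^p)^{1/p}`. -/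
noncomputable def weakLpNorm (𝕜 : Type*) [RCLike 𝕜] {X : Type*} [NormedAddCommGroup X]
    [NormedSpace 𝕜 X] (p : ℝ) (x : ℕ → X) : ℝ≥0∞ :=
  ⨆ φ ∈ {φ : X →L[𝕜] 𝕜 | ‖φ‖ ≤ 1}, (∑' j, (‖φ (x j)‖₊ : ℝ≥0∞) ^ p) ^ (1 / p)

/-- A sequence is weakly `p`-summable if `(φ(x_j))_j ∈ ℓ_p` for every continuous functional. -/
def WeaklyLpSummable (𝕜 : Type*) [RCLike 𝕜] {X : Type*} [NormedAddCommGroup X]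
    [NormedSpace 𝕜 X] (p : ℝ) (x : ℕ → X) : Prop :=
  ∀ φ : X →L[𝕜] 𝕜, Summable fun j => ‖φ (x j)‖ ^ p

open NormedSpace
lemma auxBound {𝕜 : Type*} [RCLike 𝕜] {E : Type*} [NormedAddCommGroup E] [NormedSpace 𝕜 E]
    (x : ℕ → E) (hx : ∀ φ : E →L[𝕜] 𝕜, Summable fun j => ‖φ (x j)‖) :
    ∃ C : ℝ, 0 ≤ C ∧ ∀ (φ : E →L[𝕜] 𝕜) (F : Finset ℕ), ∑ j ∈ F, ‖φ (x j)‖ ≤ C * ‖φ‖ := by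
  set g : (Finset ℕ × (ℕ → {z : 𝕜 // ‖z‖ ≤ 1})) → (StrongDual 𝕜 (StrongDual 𝕜 E)) :=
    fun p => ∑ j ∈ p.1, (p.2 j : 𝕜) • inclusionInDoubleDual 𝕜 E (x j) with hg
  have hpt : ∀ φ : StrongDual 𝕜 E, ∃ C, ∀ i, ‖g i φ‖ ≤ C := by
    intro φ
    refine ⟨∑' j, ‖φ (x j)‖, fun p => ?_⟩
    calc ‖g p φ‖ = ‖∑ j ∈ p.1, (p.2 j : 𝕜) • φ (x j)‖ := by
          simp [hg, dual_def]
      _ ≤ ∑ j ∈ p.1, ‖(p.2 j : 𝕜) • φ (x j)‖ := norm_sum_le _ _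
      _ ≤ ∑ j ∈ p.1, ‖φ (x j)‖ := by
          refine Finset.sum_le_sum fun j _ => ?_
          rw [norm_smul]
          calc ‖(p.2 j : 𝕜)‖ * ‖φ (x j)‖ ≤ 1 * ‖φ (x j)‖ :=
                mul_le_mul_of_nonneg_right (p.2 j).2 (norm_nonneg _)
            _ = ‖φ (x j)‖ := one_mul _
      _ ≤ ∑' j, ‖φ (x j)‖ := Summable.sum_le_tsum p.1 (fun j _ => norm_nonneg _) (hx φ)
  obtain ⟨C, hC⟩ := banach_steinhaus hpt
  refine ⟨max C 0, le_max_right _ _, fun φ F => ?_⟩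
  set ε : ℕ → {z : 𝕜 // ‖z‖ ≤ 1} := fun j =>
    if h : φ (x j) = 0 then ⟨1, by simp⟩
    else ⟨(‖φ (x j)‖ : 𝕜) / φ (x j), by
      rw [norm_div, RCLike.norm_ofReal, abs_of_nonneg (norm_nonneg _),
        div_self (norm_ne_zero_iff.mpr h)]⟩ with hε
  have key : ∀ j, (ε j : 𝕜) * φ (x j) = (‖φ (x j)‖ : 𝕜) := by
    intro j
    by_cases h : φ (x j) = 0
    · simp [hε, h]
    · simp only [hε, h, dif_neg, not_false_iff]
      field_simp
  have : g (F, ε) φ = ((∑ j ∈ F, ‖φ (x j)‖ : ℝ) : 𝕜) := by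
    simp only [hg, ContinuousLinearMap.sum_apply, ContinuousLinearMap.smul_apply, dual_def,
      smul_eq_mul]
    rw [RCLike.ofReal_sum]
    exact Finset.sum_congr rfl fun j _ => key j
  calc ∑ j ∈ F, ‖φ (x j)‖ = ‖g (F, ε) φ‖ := by
        rw [this, RCLike.norm_ofReal, abs_of_nonneg (Finset.sum_nonneg fun j _ => norm_nonneg _)]
    _ ≤ ‖g (F, ε)‖ * ‖φ‖ := (g (F, ε)).le_opNorm φ
    _ ≤ max C 0 * ‖φ‖ := by
        exact mul_le_mul_of_nonneg_right ((hC _).trans (le_max_left _ _)) (norm_nonneg _)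

/-- If `(x_j)` is weakly `1`-summable in a Banach space `E` and
`(α_j) ∈ c₀`, then `∑_j α_j x_j` converges and
`‖∑_j α_j x_j‖ ≤ sup_j |α_j| ⬝ ‖(x_j)‖_{w,1}`. -/
theorem stmt_2 {𝕜 : Type*} [RCLike 𝕜] {E : Type*} [NormedAddCommGroup E] [NormedSpace 𝕜 E]
    [CompleteSpace E] (x : ℕ → E) (hx : WeaklyLpSummable 𝕜 1 x)
    (α : ℕ → 𝕜) (hα : Tendsto α atTop (𝓝 0)) :
    ∃ S : E, Tendsto (fun n => ∑ j ∈ Finset.range n, α j • x j) atTop (𝓝 S) ∧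
      (‖S‖₊ : ℝ≥0∞) ≤ (⨆ j, (‖α j‖₊ : ℝ≥0∞)) * weakLpNorm 𝕜 1 x := by
  have hx' : ∀ φ : E →L[𝕜] 𝕜, Summable fun j => ‖φ (x j)‖ := by
    intro φ
    simpa [Real.rpow_one] using hx φ
  obtain ⟨C, hC0, hC⟩ := auxBound x hx'
  -- Summability
  have hαnorm : Tendsto (fun j => ‖α j‖) atTop (𝓝 0) := by
    simpa using hα.norm
  have hsum : Summable (fun j => α j • x j) := by
    rw [summable_iff_vanishing_norm]
    intro ε hε
    have hδ : (0:ℝ) < ε / (2 * (C + 1)) := by positivity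
    obtain ⟨m, hm⟩ := (Metric.tendsto_atTop.mp hαnorm) (ε / (2 * (C + 1))) hδ
    refine ⟨Finset.range m, fun t ht => ?_⟩
    have hbound : ‖∑ j ∈ t, α j • x j‖ ≤ ε / (2 * (C + 1)) * C := by
      refine norm_le_dual_bound 𝕜 _ (by positivity) fun f => ?_
      have h1 : f (∑ j ∈ t, α j • x j) = ∑ j ∈ t, α j • f (x j) := by
        simp [map_sum]
      rw [h1]
      calc ‖∑ j ∈ t, α j • f (x j)‖ ≤ ∑ j ∈ t, ‖α j‖ * ‖f (x j)‖ := by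
            refine (norm_sum_le _ _).trans (le_of_eq ?_)
            exact Finset.sum_congr rfl fun j _ => norm_smul _ _
        _ ≤ ∑ j ∈ t, (ε / (2 * (C + 1))) * ‖f (x j)‖ := by
            refine Finset.sum_le_sum fun j hj => ?_
            refine mul_le_mul_of_nonneg_right ?_ (norm_nonneg _)
            have hjm : m ≤ j := by
              by_contra hcon
              exact (Finset.disjoint_left.mp ht hj) (Finset.mem_range.mpr (not_le.mp hcon))
            have := hm j hjm
            rw [Real.dist_eq, sub_zero] at this
            exact le_of_lt (lt_of_le_of_lt (le_abs_self _) this)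
        _ = (ε / (2 * (C + 1))) * ∑ j ∈ t, ‖f (x j)‖ := by rw [Finset.mul_sum]
        _ ≤ (ε / (2 * (C + 1))) * (C * ‖f‖) :=
            mul_le_mul_of_nonneg_left (hC f t) (le_of_lt hδ)
        _ = ε / (2 * (C + 1)) * C * ‖f‖ := by ring
    refine lt_of_le_of_lt hbound ?_
    have h2 : ε / (2 * (C + 1)) * C < ε := by
      have h3 : C < 2 * (C + 1) := by linarith
      calc ε / (2 * (C + 1)) * C < ε / (2 * (C + 1)) * (2 * (C + 1)) := by
            by_cases hCz : C = 0
            · subst hCz; simp; positivity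
            · exact mul_lt_mul_of_pos_left h3 (by positivity)
        _ = ε := by field_simp
    exact h2
  set S := ∑' j, α j • x j with hS
  refine ⟨S, hsum.hasSum.tendsto_sum_nat, ?_⟩
  -- Norm bound
  by_cases hS0 : S = 0
  · simp [hS0]
  obtain ⟨φ, hφ1, hφS⟩ := exists_dual_vector 𝕜 S (norm_ne_zero_iff.mpr hS0)
  have hφle : ‖φ‖ ≤ 1 := le_of_eq hφ1
  have hA : ∀ j, (‖α j‖₊ : ℝ≥0∞) ≤ ⨆ j, (‖α j‖₊ : ℝ≥0∞) := fun j => le_iSup (fun k => (‖α k‖₊ : ℝ≥0∞)) j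
  have hsum2 : HasSum (fun j => φ (α j • x j)) (φ S) := φ.hasSum hsum.hasSum
  have hsumnorm : Summable fun j => ‖φ (α j • x j)‖ := by
    obtain ⟨A', hA'⟩ := hαnorm.bddAbove_range
    refine Summable.of_nonneg_of_le (fun j => norm_nonneg _) (fun j => ?_) (((hx' φ).mul_left A'))
    rw [map_smul, norm_smul]
    exact mul_le_mul_of_nonneg_right (hA' ⟨j, rfl⟩) (norm_nonneg _)
  have step1 : (‖S‖₊ : ℝ≥0∞) = (‖φ S‖₊ : ℝ≥0∞) := by
    rw [hφS]
    simp [nnnorm_algebraMap', ]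
  have step2 : ‖φ S‖ ≤ ∑' j, ‖φ (α j • x j)‖ := by
    rw [← hsum2.tsum_eq]
    exact norm_tsum_le_tsum_norm hsumnorm
  have step3 : (‖φ S‖₊ : ℝ≥0∞) ≤ ∑' j, (‖α j‖₊ : ℝ≥0∞) * (‖φ (x j)‖₊ : ℝ≥0∞) := by
    calc (‖φ S‖₊ : ℝ≥0∞) = ENNReal.ofReal ‖φ S‖ := (ofReal_norm _).symm
      _ ≤ ENNReal.ofReal (∑' j, ‖φ (α j • x j)‖) := ENNReal.ofReal_le_ofReal step2
      _ = ∑' j, ENNReal.ofReal ‖φ (α j • x j)‖ :=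
          ENNReal.ofReal_tsum_of_nonneg (fun j => norm_nonneg _) hsumnorm
      _ = ∑' j, (‖α j‖₊ : ℝ≥0∞) * (‖φ (x j)‖₊ : ℝ≥0∞) := by
          refine tsum_congr fun j => ?_
          rw [show ENNReal.ofReal ‖φ (α j • x j)‖ = (‖φ (α j • x j)‖₊ : ℝ≥0∞) from ofReal_norm _, map_smul, nnnorm_smul, ENNReal.coe_mul]
  have step4 : (∑' j, (‖φ (x j)‖₊ : ℝ≥0∞)) ≤ weakLpNorm 𝕜 1 x := by
    have : weakLpNorm 𝕜 1 x = ⨆ ψ ∈ {ψ : E →L[𝕜] 𝕜 | ‖ψ‖ ≤ 1}, ∑' j, (‖ψ (x j)‖₊ : ℝ≥0∞) := by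
      unfold weakLpNorm
      simp [ENNReal.rpow_one]
    rw [this]
    exact le_iSup₂ (f := fun ψ (_ : ψ ∈ {ψ : E →L[𝕜] 𝕜 | ‖ψ‖ ≤ 1}) => ∑' j, (‖ψ (x j)‖₊ : ℝ≥0∞)) φ hφle
  calc (‖S‖₊ : ℝ≥0∞) = (‖φ S‖₊ : ℝ≥0∞) := step1
    _ ≤ ∑' j, (‖α j‖₊ : ℝ≥0∞) * (‖φ (x j)‖₊ : ℝ≥0∞) := step3
    _ ≤ ∑' j, (⨆ k, (‖α k‖₊ : ℝ≥0∞)) * (‖φ (x j)‖₊ : ℝ≥0∞) :=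
        ENNReal.tsum_le_tsum fun j => mul_le_mul_left (hA j) _
    _ = (⨆ k, (‖α k‖₊ : ℝ≥0∞)) * ∑' j, (‖φ (x j)‖₊ : ℝ≥0∞) := ENNReal.tsum_mul_left
    _ ≤ (⨆ j, (‖α j‖₊ : ℝ≥0∞)) * weakLpNorm 𝕜 1 x := mul_le_mul_right step4 _
end

section
/- Let E be a Banach space. A bounded linear operator u : c_0 → E is compact if and only if the sequence (u(e_j))_{j=1}^∞ is unconditionally 1-summable in E. -/
open Filter Topology
open scoped ENNReal NNReal

/-- A sequence is unconditionally `p`-summable if it is weakly `p`-summable and the weak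
`p`-norms of its tails tend to zero. -/
def UncondLpSummable (𝕜 : Type*) [RCLike 𝕜] {X : Type*} [NormedAddCommGroup X]
    [NormedSpace 𝕜 X] (p : ℝ) (x : ℕ → X) : Prop :=
  WeaklyLpSummable 𝕜 p x ∧
    Tendsto (fun n : ℕ => weakLpNorm 𝕜 p fun j => x (n + j)) atTop (𝓝 (0 : ℝ≥0∞))

/-- The `j`-th canonical unit vector of `c₀`. -/
noncomputable def c0single (𝕜 : Type*) [RCLike 𝕜] (j : ℕ) : ZeroAtInftyContinuousMap ℕ 𝕜 where
  toFun := fun i => if i = j then 1 else 0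
  continuous_toFun := continuous_of_discreteTopology
  zero_at_infty' := by
    have h : (fun i : ℕ => if i = j then (1 : 𝕜) else 0) =ᶠ[Filter.cocompact ℕ]
        (fun _ => (0 : 𝕜)) := by
      rw [cocompact_eq_atTop]
      filter_upwards [eventually_gt_atTop j] with i hi
      simp [hi.ne']
    exact Tendsto.congr' h.symm tendsto_const_nhds

lemma weakLpNorm_one (𝕜 : Type*) [RCLike 𝕜] {X : Type*} [NormedAddCommGroup X]
    [NormedSpace 𝕜 X] (x : ℕ → X) :
    weakLpNorm 𝕜 1 x = ⨆ φ ∈ {φ : X →L[𝕜] 𝕜 | ‖φ‖ ≤ 1}, ∑' j, (‖φ (x j)‖₊ : ℝ≥0∞) := by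
  unfold weakLpNorm
  simp [ENNReal.rpow_one]

/-- bridge: ENNReal tsum of nnnorms vs real tsum of norms -/
lemma ennreal_tsum_nnnorm {X : Type*} [NormedAddCommGroup X] (f : ℕ → X)
    (h : Summable fun n => ‖f n‖) :
    (∑' n, (‖f n‖₊ : ℝ≥0∞)) = ENNReal.ofReal (∑' n, ‖f n‖) := by
  rw [ENNReal.ofReal_tsum_of_nonneg (fun n => norm_nonneg _) h]
  congr 1
  ext n
  exact (ofReal_norm _).symm


section c0
variable {𝕜 : Type*} [RCLike 𝕜]

lemma c0single_apply (j i : ℕ) : c0single 𝕜 j i = if i = j then 1 else 0 := rfl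

lemma c0_norm_eval (f : ZeroAtInftyContinuousMap ℕ 𝕜) (i : ℕ) : ‖f i‖ ≤ ‖f‖ := by
  rw [← ZeroAtInftyContinuousMap.norm_toBCF_eq_norm]
  exact BoundedContinuousFunction.norm_coe_le_norm f.toBCF i

lemma c0_norm_le (f : ZeroAtInftyContinuousMap ℕ 𝕜) {M : ℝ} (hM : 0 ≤ M)
    (h : ∀ i, ‖f i‖ ≤ M) : ‖f‖ ≤ M := by
  rw [← ZeroAtInftyContinuousMap.norm_toBCF_eq_norm]
  exact (BoundedContinuousFunction.norm_le hM).2 h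

lemma c0_sum_apply (s : Finset ℕ) (f : ℕ → ZeroAtInftyContinuousMap ℕ 𝕜) (i : ℕ) :
    (∑ j ∈ s, f j) i = ∑ j ∈ s, f j i := by
  classical
  induction s using Finset.induction with
  | empty => simp
  | insert a s h ih => simp [Finset.sum_insert h, ih]

/-- workhorse: norm of a sum of "disjointly supported" elements each bounded by 1 -/
lemma c0_disj_sum_norm_le (g : ℕ → ZeroAtInftyContinuousMap ℕ 𝕜) (s : Finset ℕ)
    (h1 : ∀ k ∈ s, ∀ i, ‖g k i‖ ≤ 1)
    (h2 : ∀ i : ℕ, ∀ k ∈ s, ∀ l ∈ s, g k i ≠ 0 → g l i ≠ 0 → k = l) :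
    ‖∑ k ∈ s, g k‖ ≤ 1 := by
  classical
  refine c0_norm_le _ zero_le_one fun i => ?_
  rw [c0_sum_apply]
  by_cases hex : ∃ k ∈ s, g k i ≠ 0
  · obtain ⟨k₀, hk₀, hk₀ne⟩ := hex
    rw [Finset.sum_eq_single_of_mem k₀ hk₀ (fun l hl hne => by
      by_contra hgl
      exact hne (h2 i l hl k₀ hk₀ hgl hk₀ne))]
    exact h1 k₀ hk₀ i
  · push_neg at hex
    rw [Finset.sum_eq_zero fun k hk => hex k hk]
    simp

/-- norm bound for sign combinations -/
lemma c0_combo_norm_le (s : Finset ℕ) (b : ℕ → 𝕜) (hb : ∀ k, ‖b k‖ ≤ 1)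
    (m : ℕ → ℕ) (hm : Function.Injective m) :
    ‖∑ k ∈ s, b k • c0single 𝕜 (m k)‖ ≤ 1 := by
  refine c0_disj_sum_norm_le _ s (fun k _ i => ?_) (fun i k _ l _ hk hl => ?_)
  · show ‖b k • c0single 𝕜 (m k) i‖ ≤ 1
    rw [c0single_apply]
    by_cases h : i = m k <;> simp [h, hb k]
  · have hk' : i = m k := by
      by_contra h
      exact hk (by show b k • c0single 𝕜 (m k) i = 0; rw [c0single_apply, if_neg h]; simp)
    have hl' : i = m l := by
      by_contra h
      exact hl (by show b l • c0single 𝕜 (m l) i = 0; rw [c0single_apply, if_neg h]; simp)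
    exact hm (hk' ▸ hl')

/-- value of a combination at a coordinate in the image -/
lemma c0_combo_apply_mem (s : Finset ℕ) (b : ℕ → 𝕜) (m : ℕ → ℕ) (hm : Function.Injective m)
    (k : ℕ) (hk : k ∈ s) : (∑ l ∈ s, b l • c0single 𝕜 (m l)) (m k) = b k := by
  classical
  rw [c0_sum_apply]
  rw [Finset.sum_eq_single_of_mem k hk (fun l hl hne => by
    show b l • c0single 𝕜 (m l) (m k) = 0
    rw [c0single_apply, if_neg (fun h => hne (hm h.symm))]; simp)]
  show b k • c0single 𝕜 (m k) (m k) = b k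
  rw [c0single_apply, if_pos rfl]; simp

lemma c0_combo_apply_not_mem (s : Finset ℕ) (b : ℕ → 𝕜) (m : ℕ → ℕ)
    (i : ℕ) (hi : ∀ k ∈ s, m k ≠ i) : (∑ l ∈ s, b l • c0single 𝕜 (m l)) i = 0 := by
  rw [c0_sum_apply]
  exact Finset.sum_eq_zero fun l hl => by
    show b l • c0single 𝕜 (m l) i = 0
    rw [c0single_apply, if_neg (fun h : i = m l => hi l hl h.symm)]; simp

end c0

section expansion
variable {𝕜 : Type*} [RCLike 𝕜]

lemma c0_expand_apply (s : Finset ℕ) (y : ℕ → 𝕜) (i : ℕ) :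
    (∑ j ∈ s, y j • c0single 𝕜 j) i = if i ∈ s then y i else 0 := by
  classical
  rw [c0_sum_apply]
  have : ∀ j ∈ s, (y j • c0single 𝕜 j) i = if i = j then y j else 0 := fun j _ => by
    show y j • c0single 𝕜 j i = _
    rw [c0single_apply]; by_cases h : i = j <;> simp [h]
  rw [Finset.sum_congr rfl this, Finset.sum_ite_eq]

lemma c0_hasSum_expansion (y : ZeroAtInftyContinuousMap ℕ 𝕜) :
    HasSum (fun j => y j • c0single 𝕜 j) y := by
  classical
  rw [HasSum, SummationFilter.unconditional_filter, Metric.tendsto_atTop]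
  intro ε hε
  have hy : Tendsto (fun i => y i) atTop (𝓝 0) := by
    have := y.zero_at_infty'
    rwa [cocompact_eq_atTop] at this
  obtain ⟨M, hM⟩ := (Metric.tendsto_atTop.1 hy) (ε/2) (by positivity)
  refine ⟨Finset.range M, fun s hs => ?_⟩
  rw [dist_eq_norm]
  have key : ∀ i : ℕ, ‖((∑ j ∈ s, y j • c0single 𝕜 j) - y) i‖ ≤ ε / 2 := by
    intro i
    have happ : ((∑ j ∈ s, y j • c0single 𝕜 j) - y) i
        = (∑ j ∈ s, y j • c0single 𝕜 j) i - y i := rfl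
    rw [happ, c0_expand_apply]
    by_cases hi : i ∈ s
    · simp [hi, le_of_lt hε]; positivity
    · rw [if_neg hi, zero_sub, norm_neg]
      have hMi : M ≤ i := by
        by_contra h
        exact hi (hs (Finset.mem_range.2 (not_le.1 h)))
      have := hM i hMi
      rw [dist_zero_right] at this
      exact this.le
  exact lt_of_le_of_lt (c0_norm_le _ (by positivity) key) (by linarith)
end expansion

section mainAux
variable {𝕜 : Type*} [RCLike 𝕜] {E : Type*} [NormedAddCommGroup E] [NormedSpace 𝕜 E]
  [CompleteSpace E] (u : ZeroAtInftyContinuousMap ℕ 𝕜 →L[𝕜] E)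

/-- summability of |φ(u e_j)| given weak summability -/
lemma summable_phi (hw : ∀ φ : E →L[𝕜] 𝕜, Summable fun j => ‖φ (u (c0single 𝕜 j))‖ ^ (1:ℝ))
    (φ : E →L[𝕜] 𝕜) : Summable fun j => ‖φ (u (c0single 𝕜 j))‖ := by
  have := hw φ
  simpa using this

/-- Claim A: tail estimate on `u y` for `y` supported in `[n, ∞)` with `‖y‖ ≤ 1`. -/
lemma claimA (hw : ∀ φ : E →L[𝕜] 𝕜, Summable fun j => ‖φ (u (c0single 𝕜 j))‖ ^ (1:ℝ))
    (n : ℕ) (T : ℝ)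
    (hT : ∀ φ : E →L[𝕜] 𝕜, ‖φ‖ ≤ 1 → ∑' k, ‖φ (u (c0single 𝕜 (n + k)))‖ ≤ T)
    (y : ZeroAtInftyContinuousMap ℕ 𝕜) (hy : ‖y‖ ≤ 1) (hy0 : ∀ i < n, y i = 0) :
    ‖u y‖ ≤ T := by
  obtain ⟨φ, hφ1, hφ2⟩ := exists_dual_vector'' 𝕜 (u y)
  have hs : HasSum (fun j => φ (u (y j • c0single 𝕜 j))) (φ (u y)) :=
    (φ.comp u).hasSum (c0_hasSum_expansion y)
  have hterm : ∀ j, φ (u (y j • c0single 𝕜 j)) = y j * φ (u (c0single 𝕜 j)) := fun j => by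
    rw [map_smul, map_smul, smul_eq_mul]
  have hs' : HasSum (fun j => y j * φ (u (c0single 𝕜 j))) (φ (u y)) := by
    rwa [funext hterm] at hs
  have hyj : ∀ j, ‖y j‖ ≤ 1 := fun j => (c0_norm_eval y j).trans hy
  have hsum_norm : Summable fun j => ‖y j * φ (u (c0single 𝕜 j))‖ := by
    refine Summable.of_nonneg_of_le (fun j => norm_nonneg _) (fun j => ?_) (summable_phi u hw φ)
    rw [norm_mul]
    calc ‖y j‖ * ‖φ (u (c0single 𝕜 j))‖ ≤ 1 * ‖φ (u (c0single 𝕜 j))‖ :=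
          mul_le_mul_of_nonneg_right (hyj j) (norm_nonneg _)
      _ = _ := one_mul _
  have huy : ‖u y‖ = ‖φ (u y)‖ := by
    rw [hφ2, RCLike.norm_ofReal, abs_of_nonneg (norm_nonneg _)]
  rw [huy, ← hs'.tsum_eq]
  have h1 : ‖∑' j, y j * φ (u (c0single 𝕜 j))‖ ≤ ∑' j, ‖y j * φ (u (c0single 𝕜 j))‖ :=
    norm_tsum_le_tsum_norm hsum_norm
  refine h1.trans ?_
  set f := fun j => ‖y j * φ (u (c0single 𝕜 j))‖ with hf
  have hsplit : ∑' j, f j = ∑ j ∈ Finset.range n, f j + ∑' k, f (k + n) :=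
    (Summable.sum_add_tsum_nat_add n hsum_norm).symm
  have hzero : ∑ j ∈ Finset.range n, f j = 0 := by
    refine Finset.sum_eq_zero fun j hj => ?_
    simp [hf, hy0 j (Finset.mem_range.1 hj)]
  rw [hsplit, hzero, zero_add]
  have hshift : Summable fun k => f (k + n) := (summable_nat_add_iff n).2 hsum_norm
  have hshift2 : Summable fun k => ‖φ (u (c0single 𝕜 (n + k)))‖ := by
    have := (summable_nat_add_iff n).2 (summable_phi u hw φ)
    refine this.congr fun k => by rw [add_comm]
  have : ∑' k, f (k + n) ≤ ∑' k, ‖φ (u (c0single 𝕜 (n + k)))‖ := by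
    refine Summable.tsum_le_tsum (fun k => ?_) hshift hshift2
    rw [hf]
    simp only [norm_mul, add_comm k n]
    calc ‖y (n + k)‖ * ‖φ (u (c0single 𝕜 (n + k)))‖
        ≤ 1 * ‖φ (u (c0single 𝕜 (n + k)))‖ :=
          mul_le_mul_of_nonneg_right (hyj _) (norm_nonneg _)
      _ = _ := one_mul _
  exact this.trans (hT φ hφ1)
/-- From a bound on the weak tail norm, get a real tail bound for unit functionals. -/
lemma tail_real_bound (hw : ∀ φ : E →L[𝕜] 𝕜, Summable fun j => ‖φ (u (c0single 𝕜 j))‖ ^ (1:ℝ))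
    (n : ℕ) (T : ℝ) (hTpos : 0 ≤ T)
    (h : weakLpNorm 𝕜 1 (fun j => u (c0single 𝕜 (n + j))) ≤ ENNReal.ofReal T)
    (φ : E →L[𝕜] 𝕜) (hφ : ‖φ‖ ≤ 1) : ∑' k, ‖φ (u (c0single 𝕜 (n + k)))‖ ≤ T := by
  rw [weakLpNorm_one] at h
  have h2 : (∑' k, (‖φ (u (c0single 𝕜 (n + k)))‖₊ : ℝ≥0∞)) ≤ ENNReal.ofReal T :=
    le_trans (le_iSup₂ (f := fun (ψ : E →L[𝕜] 𝕜) (_ : ψ ∈ {ψ : E →L[𝕜] 𝕜 | ‖ψ‖ ≤ 1}) =>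
      ∑' j, (‖ψ (u (c0single 𝕜 (n + j)))‖₊ : ℝ≥0∞)) φ hφ) h
  have hsum : Summable fun k => ‖φ (u (c0single 𝕜 (n + k)))‖ := by
    have := (summable_nat_add_iff n).2 (summable_phi u hw φ)
    exact this.congr fun k => by rw [add_comm]
  rw [ennreal_tsum_nnnorm _ hsum] at h2
  rwa [ENNReal.ofReal_le_ofReal_iff hTpos] at h2

/-- Direction ⇐ -/
lemma compact_of_uncond (h : UncondLpSummable 𝕜 1 fun j => u (c0single 𝕜 j)) :
    IsCompactOperator ⇑u := by
  classical
  obtain ⟨hw, ht⟩ := h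
  have hw' : ∀ φ : E →L[𝕜] 𝕜, Summable fun j => ‖φ (u (c0single 𝕜 j))‖ ^ (1:ℝ) := hw
  refine ⟨closure (u '' Metric.closedBall 0 1), ?_, ?_⟩
  swap
  · exact mem_of_superset (Metric.closedBall_mem_nhds _ one_pos)
      (fun x hx => subset_closure (Set.mem_image_of_mem _ hx))
  refine TotallyBounded.isCompact_of_isClosed ?_ isClosed_closure
  refine TotallyBounded.closure ?_
  rw [Metric.totallyBounded_iff]
  intro ε hε
  -- find n with small weak tail norm
  have hev : ∀ᶠ n in atTop, weakLpNorm 𝕜 1 (fun j => u (c0single 𝕜 (n + j)))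
      < ENNReal.ofReal (ε/3) := by
    refine ht.eventually (gt_mem_nhds ?_)
    rw [ENNReal.ofReal_pos]
    positivity
  obtain ⟨n, hn⟩ := hev.exists
  have htail : ∀ φ : E →L[𝕜] 𝕜, ‖φ‖ ≤ 1 → ∑' k, ‖φ (u (c0single 𝕜 (n + k)))‖ ≤ ε/3 :=
    tail_real_bound u hw' n (ε/3) (by positivity) hn.le
  -- the compact finite-dimensional piece
  set g : (Fin n → 𝕜) → E := fun a => ∑ j : Fin n, a j • u (c0single 𝕜 (j : ℕ)) with hg
  have hgc : Continuous g := by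
    refine continuous_finset_sum _ fun j _ => ?_
    exact (continuous_apply j).smul continuous_const
  have hK0 : IsCompact (g '' Metric.closedBall 0 1) :=
    (isCompact_closedBall (0 : Fin n → 𝕜) 1).image hgc
  obtain ⟨t, htfin, htcov⟩ := (Metric.totallyBounded_iff.1 hK0.totallyBounded) (ε/2)
    (by positivity)
  refine ⟨t, htfin, ?_⟩
  rintro - ⟨x, hx, rfl⟩
  rw [Metric.mem_closedBall, dist_zero_right] at hx
  -- approximation: u x is within ε/3 of g a
  set a : Fin n → 𝕜 := fun j => x (j : ℕ) with ha
  have hax : a ∈ Metric.closedBall (0 : Fin n → 𝕜) 1 := by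
    rw [Metric.mem_closedBall, dist_zero_right]
    refine (pi_norm_le_iff_of_nonneg zero_le_one).2 fun j => (c0_norm_eval x _).trans hx
  have hPn : g a = u (∑ j ∈ Finset.range n, x j • c0single 𝕜 j) := by
    rw [map_sum]
    simp only [map_smul]
    rw [hg, Finset.sum_range fun j => x j • u (c0single 𝕜 j)]
  have hdiff : ‖u x - g a‖ ≤ ε/3 := by
    rw [hPn, ← map_sub]
    refine claimA u hw' n (ε/3) htail _ ?_ ?_
    · refine c0_norm_le _ (by positivity) fun i => ?_
      have happ : (x - ∑ j ∈ Finset.range n, x j • c0single 𝕜 j) i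
          = x i - (∑ j ∈ Finset.range n, x j • c0single 𝕜 j) i := rfl
      rw [happ, c0_expand_apply]
      by_cases hi : i ∈ Finset.range n
      · simp [hi]
      · rw [if_neg hi, sub_zero]
        exact (c0_norm_eval x i).trans hx
    · intro i hi
      have happ : (x - ∑ j ∈ Finset.range n, x j • c0single 𝕜 j) i
          = x i - (∑ j ∈ Finset.range n, x j • c0single 𝕜 j) i := rfl
      rw [happ, c0_expand_apply, if_pos (Finset.mem_range.2 hi), sub_self]
  -- conclude
  have hga : g a ∈ g '' Metric.closedBall 0 1 := Set.mem_image_of_mem _ hax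
  obtain ⟨c, hc, hcball⟩ := Set.mem_iUnion₂.1 (htcov hga)
  refine Set.mem_iUnion₂.2 ⟨c, hc, ?_⟩
  rw [Metric.mem_ball]
  calc dist (u x) c ≤ dist (u x) (g a) + dist (g a) c := dist_triangle _ _ _
    _ < ε/3 + ε/2 := by
        refine add_lt_add_of_le_of_lt ?_ (Metric.mem_ball.1 hcball)
        rw [dist_eq_norm]; exact hdiff
    _ < ε := by linarith

/-- sign choice: for any `c` there is `σ` with `‖σ‖ ≤ 1` and `σ * c = ‖c‖`. -/
lemma sign_exists (c : 𝕜) : ∃ σ : 𝕜, ‖σ‖ ≤ 1 ∧ σ * c = (‖c‖ : 𝕜) := by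
  by_cases hc : c = 0
  · exact ⟨1, by simp [hc]⟩
  · refine ⟨(‖c‖ : 𝕜) / c, ?_, by field_simp⟩
    rw [norm_div, RCLike.norm_ofReal, abs_of_nonneg (norm_nonneg _)]
    rw [div_le_one (norm_pos_iff.2 hc)]

/-- Weak summability holds for any bounded operator. -/
lemma weakly_summable_aux (φ : E →L[𝕜] 𝕜) :
    Summable fun j => ‖φ (u (c0single 𝕜 j))‖ := by
  classical
  have hsg : ∀ c : 𝕜, ∃ σ : 𝕜, ‖σ‖ ≤ 1 ∧ σ * c = (‖c‖ : 𝕜) := sign_exists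
  choose σ hσ1 hσ2 using hsg
  refine summable_of_sum_range_le (c := ‖φ‖ * ‖u‖) (fun j => norm_nonneg _) (fun m => ?_)
  set b : ℕ → 𝕜 := fun j => σ (φ (u (c0single 𝕜 j))) with hb
  set x := ∑ j ∈ Finset.range m, b j • c0single 𝕜 j with hx
  have hxnorm : ‖x‖ ≤ 1 := by
    have := c0_combo_norm_le (Finset.range m) b (fun k => hσ1 _) id Function.injective_id
    simpa using this
  have hux : φ (u x) = ((∑ j ∈ Finset.range m, ‖φ (u (c0single 𝕜 j))‖ : ℝ) : 𝕜) := by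
    rw [hx, map_sum, map_sum]
    push_cast
    refine Finset.sum_congr rfl fun j _ => ?_
    rw [map_smul, map_smul, smul_eq_mul, hb]
    exact hσ2 _
  have h1 : ‖φ (u x)‖ = ∑ j ∈ Finset.range m, ‖φ (u (c0single 𝕜 j))‖ := by
    rw [hux, RCLike.norm_ofReal, abs_of_nonneg (Finset.sum_nonneg fun j _ => norm_nonneg _)]
  calc ∑ j ∈ Finset.range m, ‖φ (u (c0single 𝕜 j))‖ = ‖φ (u x)‖ := h1.symm
    _ ≤ ‖φ‖ * ‖u x‖ := φ.le_opNorm _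
    _ ≤ ‖φ‖ * (‖u‖ * ‖x‖) := by gcongr; exact u.le_opNorm _
    _ ≤ ‖φ‖ * (‖u‖ * 1) := by gcongr
    _ = ‖φ‖ * ‖u‖ := by ring

/-- If the tail weak norm exceeds `δ`, there is a finitely supported unit vector far out
whose image has norm `> δ`. -/
lemma exists_bad (n : ℕ) (δ : ℝ) (hδ : 0 ≤ δ)
    (h : ENNReal.ofReal δ < weakLpNorm 𝕜 1 fun j => u (c0single 𝕜 (n + j))) :
    ∃ (x : ZeroAtInftyContinuousMap ℕ 𝕜) (N : ℕ), n ≤ N ∧ ‖x‖ ≤ 1 ∧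
      (∀ i, (i < n ∨ N ≤ i) → x i = 0) ∧ δ < ‖u x‖ := by
  classical
  rw [weakLpNorm_one] at h
  rw [lt_iSup_iff] at h
  obtain ⟨φ, hφ⟩ := h
  rw [lt_iSup_iff] at hφ
  obtain ⟨hφ1, hφ2⟩ := hφ
  rw [ENNReal.tsum_eq_iSup_sum, lt_iSup_iff] at hφ2
  obtain ⟨s, hs⟩ := hφ2
  have hs' : δ < ∑ k ∈ s, ‖φ (u (c0single 𝕜 (n + k)))‖ := by
    have : (∑ k ∈ s, (‖φ (u (c0single 𝕜 (n + k)))‖₊ : ℝ≥0∞))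
        = ENNReal.ofReal (∑ k ∈ s, ‖φ (u (c0single 𝕜 (n + k)))‖) := by
      rw [ENNReal.ofReal_sum_of_nonneg (fun k _ => norm_nonneg _)]
      exact Finset.sum_congr rfl fun k _ => (ofReal_norm _).symm
    rw [this, ENNReal.ofReal_lt_ofReal_iff_of_nonneg hδ] at hs
    exact hs
  have hsg : ∀ c : 𝕜, ∃ σ : 𝕜, ‖σ‖ ≤ 1 ∧ σ * c = (‖c‖ : 𝕜) := sign_exists
  choose σ hσ1 hσ2 using hsg
  set b : ℕ → 𝕜 := fun k => σ (φ (u (c0single 𝕜 (n + k)))) with hb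
  set x := ∑ k ∈ s, b k • c0single 𝕜 (n + k) with hx
  have hminj : Function.Injective fun k : ℕ => n + k := fun a b h => Nat.add_left_cancel h
  refine ⟨x, n + (s.sup id) + 1, by omega, ?_, ?_, ?_⟩
  · exact c0_combo_norm_le s b (fun k => hσ1 _) _ hminj
  · intro i hi
    rw [hx]
    refine c0_combo_apply_not_mem s b _ i fun k hk => ?_
    rcases hi with hi | hi
    · omega
    · have : k ≤ s.sup id := Finset.le_sup (f := id) hk
      omega
  · have hux : φ (u x) = ((∑ k ∈ s, ‖φ (u (c0single 𝕜 (n + k)))‖ : ℝ) : 𝕜) := by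
      rw [hx, map_sum, map_sum]
      push_cast
      refine Finset.sum_congr rfl fun k _ => ?_
      rw [map_smul, map_smul, smul_eq_mul, hb]
      exact hσ2 _
    have h1 : ‖φ (u x)‖ = ∑ k ∈ s, ‖φ (u (c0single 𝕜 (n + k)))‖ := by
      rw [hux, RCLike.norm_ofReal, abs_of_nonneg (Finset.sum_nonneg fun k _ => norm_nonneg _)]
    have h2 : ‖φ (u x)‖ ≤ ‖u x‖ := by
      calc ‖φ (u x)‖ ≤ ‖φ‖ * ‖u x‖ := φ.le_opNorm _
        _ ≤ 1 * ‖u x‖ := mul_le_mul_of_nonneg_right hφ1 (norm_nonneg _)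
        _ = ‖u x‖ := one_mul _
    linarith [h1 ▸ h2, hs']


/-- iterate a function from 0 -/
def tailSeq (N : ℕ → ℕ) : ℕ → ℕ
  | 0 => 0
  | (k+1) => N (tailSeq N k)

lemma tail_antitone :
    Antitone fun n => weakLpNorm 𝕜 1 fun j => u (c0single 𝕜 (n + j)) := by
  refine antitone_nat_of_succ_le fun n => ?_
  rw [weakLpNorm_one, weakLpNorm_one]
  refine iSup₂_le fun φ hφ => ?_
  refine le_trans ?_ (le_iSup₂ (f := fun (ψ : E →L[𝕜] 𝕜) (_ : ψ ∈ {ψ : E →L[𝕜] 𝕜 | ‖ψ‖ ≤ 1}) =>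
    ∑' j, (‖ψ (u (c0single 𝕜 (n + j)))‖₊ : ℝ≥0∞)) φ hφ)
  have : ∀ j : ℕ, n + 1 + j = n + (j + 1) := fun j => by omega
  calc (∑' j, (‖φ (u (c0single 𝕜 (n + 1 + j)))‖₊ : ℝ≥0∞))
      = ∑' j, (‖φ (u (c0single 𝕜 (n + (j + 1))))‖₊ : ℝ≥0∞) :=
        tsum_congr fun j => by rw [this j]
    _ ≤ ∑' j, (‖φ (u (c0single 𝕜 (n + j)))‖₊ : ℝ≥0∞) :=
        ENNReal.tsum_comp_le_tsum_of_injective (add_left_injective 1)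
          (fun j => (‖φ (u (c0single 𝕜 (n + j)))‖₊ : ℝ≥0∞))

lemma tail_exists_small (hc : IsCompactOperator ⇑u) (ε : ℝ≥0∞) (hε : 0 < ε) :
    ∃ n, weakLpNorm 𝕜 1 (fun j => u (c0single 𝕜 (n + j))) ≤ ε := by
  classical
  by_contra hcon
  push_neg at hcon
  set δ : ℝ := (min ε 1).toReal with hδdef
  have hmin_ne_top : (min ε 1 : ℝ≥0∞) ≠ ⊤ :=
    ne_top_of_le_ne_top ENNReal.one_ne_top (min_le_right _ _)
  have hδpos : 0 < δ := by
    rw [hδdef]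
    exact ENNReal.toReal_pos (lt_min hε zero_lt_one).ne' hmin_ne_top
  have hbad : ∀ n, ENNReal.ofReal δ < weakLpNorm 𝕜 1 fun j => u (c0single 𝕜 (n + j)) := by
    intro n
    have h1 : ENNReal.ofReal δ = min ε 1 := by
      rw [hδdef, ENNReal.ofReal_toReal hmin_ne_top]
    rw [h1]
    exact lt_of_le_of_lt (min_le_left _ _) (hcon n)
  -- choose bad vectors
  have hex : ∀ n : ℕ, ∃ x : ZeroAtInftyContinuousMap ℕ 𝕜, ∃ N : ℕ, n ≤ N ∧ ‖x‖ ≤ 1 ∧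
      (∀ i, (i < n ∨ N ≤ i) → x i = 0) ∧ δ < ‖u x‖ :=
    fun n => exists_bad u n δ hδpos.le (hbad n)
  choose X N hN hX1 hX0 hXδ using hex
  -- recursive sequence of starting points
  set a : ℕ → ℕ := tailSeq N with ha
  have ha_succ : ∀ k, a (k + 1) = N (a k) := fun k => by rw [ha]; rfl
  have ha_mono : Monotone a := monotone_nat_of_le_succ fun k => by
    rw [ha_succ]; exact hN _
  -- disjointness of supports
  have hdisj : ∀ i : ℕ, ∀ k l : ℕ, X (a k) i ≠ 0 → X (a l) i ≠ 0 → k = l := by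
    intro i k l hk hl
    have hsupp : ∀ m : ℕ, X (a m) i ≠ 0 → a m ≤ i ∧ i < a (m + 1) := by
      intro m hm
      by_contra hcon2
      rw [not_and_or, not_le, not_lt] at hcon2
      refine hm (hX0 (a m) i ?_)
      rw [ha_succ] at hcon2
      tauto
    obtain ⟨h1k, h2k⟩ := hsupp k hk
    obtain ⟨h1l, h2l⟩ := hsupp l hl
    by_contra hne
    rcases Nat.lt_or_ge k l with h | h
    · have : a (k + 1) ≤ a l := ha_mono h
      omega
    · have hlt : l < k := by omega
      have : a (l + 1) ≤ a k := ha_mono hlt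
      omega
  -- norm bound on disjoint sums
  have hsumnorm : ∀ S : Finset ℕ, ‖∑ k ∈ S, X (a k)‖ ≤ 1 := by
    intro S
    refine c0_disj_sum_norm_le _ S (fun k _ i => (c0_norm_eval _ i).trans (hX1 _)) ?_
    intro i k _ l _ hk hl
    exact hdisj i k l hk hl
  -- compactness: extract convergent subsequence of images
  obtain ⟨K, hK, hKmem⟩ := hc
  obtain ⟨r, hr, hrK⟩ := Metric.mem_nhds_iff.1 hKmem
  set c : 𝕜 := ((r/2 : ℝ) : 𝕜) with hcdef
  have hcnorm : ‖c‖ = r/2 := by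
    rw [hcdef, RCLike.norm_ofReal, abs_of_nonneg (by positivity)]
  have hin : ∀ k, u (c • X (a k)) ∈ K := by
    intro k
    refine Set.mem_preimage.1 (hrK ?_)
    rw [Metric.mem_ball, dist_zero_right]
    have hb : ‖c • X (a k)‖ ≤ r/2 := by
      refine c0_norm_le _ (by positivity) fun i => ?_
      show ‖c • X (a k) i‖ ≤ r/2
      rw [smul_eq_mul, norm_mul, hcnorm]
      calc r/2 * ‖X (a k) i‖ ≤ r/2 * 1 := by
            refine mul_le_mul_of_nonneg_left ?_ (by positivity)
            exact (c0_norm_eval _ i).trans (hX1 _)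
        _ = r/2 := mul_one _
    linarith
  obtain ⟨w, hwK, ψ, hψmono, hψtend⟩ := hK.tendsto_subseq hin
  -- rescale the limit
  have hcne : c ≠ 0 := by
    intro h
    rw [h, norm_zero] at hcnorm
    linarith
  set w' : E := c⁻¹ • w with hw'def
  have htend' : Tendsto (fun i => u (X (a (ψ i)))) atTop (𝓝 w') := by
    have h1 : Tendsto (fun i => c⁻¹ • u (c • X (a (ψ i)))) atTop (𝓝 (c⁻¹ • w)) :=
      (hψtend.const_smul c⁻¹)
    refine h1.congr fun i => ?_
    rw [map_smul, inv_smul_smul₀ hcne]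
  -- limit has norm ≥ δ
  have hw'norm : δ ≤ ‖w'‖ :=
    ge_of_tendsto htend'.norm (Eventually.of_forall fun i => (hXδ _).le)
  -- choose a far tail where images are close to w'
  obtain ⟨M, hM⟩ := (Metric.tendsto_atTop.1 htend') (δ/4) (by positivity)
  obtain ⟨m, hm⟩ := exists_nat_gt (‖u‖ / (δ/2))
  have hm' : ‖u‖ < (m : ℝ) * (δ/2) := by
    rwa [div_lt_iff₀ (by positivity)] at hm
  set I : Finset ℕ := Finset.Ico M (M + m) with hI
  set v := ∑ i ∈ I, X (a (ψ i)) with hv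
  have hvnorm : ‖v‖ ≤ 1 := by
    have himg : v = ∑ k ∈ I.image ψ, X (a k) := by
      rw [hv, Finset.sum_image (fun x _ y _ h => hψmono.injective h)]
    rw [himg]
    exact hsumnorm _
  have hcard : (I.card : ℝ) = m := by rw [hI, Nat.card_Ico]; simp
  have hclose : ∀ i ∈ I, ‖u (X (a (ψ i))) - w'‖ ≤ δ/4 := by
    intro i hi
    rw [hI, Finset.mem_Ico] at hi
    have := hM i hi.1
    rw [dist_eq_norm] at this
    exact this.le
  have hsub : ‖u v - (m : 𝕜) • w'‖ ≤ (m : ℝ) * (δ/4) := by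
    have h1 : u v = ∑ i ∈ I, u (X (a (ψ i))) := by rw [hv, map_sum]
    have h2 : (m : 𝕜) • w' = ∑ _i ∈ I, w' := by
      rw [Finset.sum_const, Nat.cast_smul_eq_nsmul]
      congr 1
      rw [hI, Nat.card_Ico]
      omega
    rw [h1, h2, ← Finset.sum_sub_distrib]
    calc ‖∑ i ∈ I, (u (X (a (ψ i))) - w')‖ ≤ ∑ i ∈ I, ‖u (X (a (ψ i))) - w'‖ :=
          norm_sum_le _ _
      _ ≤ ∑ _i ∈ I, (δ/4) := Finset.sum_le_sum hclose
      _ = (m : ℝ) * (δ/4) := by rw [Finset.sum_const, nsmul_eq_mul, hcard]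
  have hmsmul : ‖(m : 𝕜) • w'‖ = (m : ℝ) * ‖w'‖ := by
    rw [norm_smul, RCLike.norm_natCast]
  have hlow : (m : ℝ) * ‖w'‖ - (m : ℝ) * (δ/4) ≤ ‖u v‖ := by
    have := norm_sub_norm_le ((m : 𝕜) • w') (u v)
    have h3 : ‖(m : 𝕜) • w' - u v‖ = ‖u v - (m : 𝕜) • w'‖ := norm_sub_rev _ _
    rw [h3, hmsmul] at this
    linarith [hsub]
  have hup : ‖u v‖ ≤ ‖u‖ := by
    calc ‖u v‖ ≤ ‖u‖ * ‖v‖ := u.le_opNorm v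
      _ ≤ ‖u‖ * 1 := mul_le_mul_of_nonneg_left hvnorm (norm_nonneg u)
      _ = ‖u‖ := mul_one _
  have hmw : (m : ℝ) * δ ≤ (m : ℝ) * ‖w'‖ :=
    mul_le_mul_of_nonneg_left hw'norm (Nat.cast_nonneg m)
  have hu0 : (0:ℝ) ≤ ‖u‖ := norm_nonneg u
  linarith

end mainAux

/-- A bounded operator `u : c₀ → E` is compact iff `(u(e_j))_j` is
unconditionally `1`-summable in `E`. -/
theorem stmt_8 {𝕜 : Type*} [RCLike 𝕜] {E : Type*} [NormedAddCommGroup E] [NormedSpace 𝕜 E]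
    [CompleteSpace E] (u : ZeroAtInftyContinuousMap ℕ 𝕜 →L[𝕜] E) :
    IsCompactOperator ⇑u ↔ UncondLpSummable 𝕜 1 fun j => u (c0single 𝕜 j) := by
  constructor
  · intro hc
    refine ⟨fun φ => ?_, ?_⟩
    · have := weakly_summable_aux u φ
      simpa using this
    · rw [ENNReal.tendsto_atTop_zero]
      intro ε hε
      obtain ⟨N, hN⟩ := tail_exists_small u hc ε hε
      exact ⟨N, fun n hn => le_trans (tail_antitone u hn) hN⟩
  · exact compact_of_uncond u
end

section
/- Let E be a Banach space, 1 < p < ∞ and p* = p/(p−1). Let (x_i)_{i=1}^∞ be a mid p-summable sequence in E and let (a_j)_{j=1}^∞, with a_j = (α_{j,i})_{i=1}^∞ ∈ ℓ_{p*}, be a weakly p-summable sequence in ℓ_{p*}. Then for each j the series ∑_{i=1}^∞ α_{j,i} x_i converges in E, the sequence (∑_{i=1}^∞ α_{j,i} x_i)_{j=1}^∞ is mid p-summable, and ‖(∑_{i=1}^∞ α_{j,i} x_i)_{j=1}^∞‖_{mid,p} ≤ ‖(a_j)_{j=1}^∞‖_{w,p} · ‖(x_i)_{i=1}^∞‖_{mid,p}.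 -/
set_option maxHeartbeats 1000000


open Filter Topology
open scoped ENNReal NNReal

/-- The mid `p`-"norm" of a sequence, valued in `ℝ≥0∞`: the supremum of
`(∑_n ∑_j |φ_n(x_j)|^p)^{1/p}` over all weakly `p`-summable sequences `(φ_n)` in the dual
with weak `p`-norm at most one.  A sequence is mid `p`-summable iff this is `< ⊤`. -/
noncomputable def midLpNorm (𝕜 : Type*) [RCLike 𝕜] {X : Type*} [NormedAddCommGroup X]
    [NormedSpace 𝕜 X] (p : ℝ) (x : ℕ → X) : ℝ≥0∞ :=
  ⨆ φ ∈ {φ : ℕ → X →L[𝕜] 𝕜 | WeaklyLpSummable 𝕜 p φ ∧ weakLpNorm 𝕜 p φ ≤ 1},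
    (∑' n, ∑' j, (‖φ n (x j)‖₊ : ℝ≥0∞) ^ p) ^ (1 / p)

lemma aux_le_rpow {s W : ℝ≥0∞} {p : ℝ} (hp : 0 < p) (h : s ^ (1/p) ≤ W) : s ≤ W ^ p := by
  have := ENNReal.rpow_le_rpow h hp.le
  rwa [← ENNReal.rpow_mul, one_div, inv_mul_cancel₀ hp.ne', ENNReal.rpow_one] at this

lemma aux_rpow_inv {s : ℝ≥0∞} {p : ℝ} (hp : 0 < p) : (s ^ p) ^ (1/p) = s := by
  rw [← ENNReal.rpow_mul, one_div, mul_inv_cancel₀ hp.ne', ENNReal.rpow_one]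

lemma aux_enn_pow {X : Type*} [NormedAddCommGroup X] (z : X) {p : ℝ} (hp : 0 ≤ p) :
    (‖z‖₊ : ℝ≥0∞) ^ p = ENNReal.ofReal (‖z‖ ^ p) := by
  rw [← ENNReal.ofReal_coe_nnreal, coe_nnnorm, ← ENNReal.ofReal_rpow_of_nonneg (norm_nonneg z) hp]

lemma aux_conv {u : ℕ → ℝ} (hu : ∀ i, 0 ≤ u i) {M : ℝ≥0∞} (hM : M ≠ ⊤)
    (h : ∑' i, ENNReal.ofReal (u i) ≤ M) : Summable u ∧ ∑' i, u i ≤ M.toReal := by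
  have hne : ∑' i, ENNReal.ofReal (u i) ≠ ⊤ := (lt_of_le_of_lt h hM.lt_top).ne
  have hsum : Summable u := by
    have := ENNReal.summable_toReal hne
    simpa [ENNReal.toReal_ofReal, hu] using this
  refine ⟨hsum, ?_⟩
  have := ENNReal.toReal_mono hM h
  rwa [ENNReal.tsum_toReal_eq (fun i => ENNReal.ofReal_ne_top),
    funext (fun i => ENNReal.toReal_ofReal (hu i))] at this

lemma aux_conv2 {u : ℕ → ℝ} (hu : ∀ i, 0 ≤ u i) (hs : Summable u) :
    ∑' i, ENNReal.ofReal (u i) = ENNReal.ofReal (∑' i, u i) :=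
  (ENNReal.ofReal_tsum_of_nonneg hu hs).symm

section
variable {𝕜 : Type*} [RCLike 𝕜] {X : Type*} [NormedAddCommGroup X] [NormedSpace 𝕜 X] {p : ℝ}

lemma rpow_inv_real {s : ℝ} (hs : 0 ≤ s) {p : ℝ} (hp : 0 < p) : (s ^ (1/p)) ^ p = s := by
  rw [← Real.rpow_mul hs, one_div, inv_mul_cancel₀ hp.ne', Real.rpow_one]

lemma rpow_inv_real' {s : ℝ} (hs : 0 ≤ s) {p : ℝ} (hp : 0 < p) : (s ^ p) ^ (1/p) = s := by
  rw [← Real.rpow_mul hs, mul_one_div, div_self hp.ne', Real.rpow_one]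

lemma single_le_mid (hp : 1 < p) (x : ℕ → X) (φ : X →L[𝕜] 𝕜) (hφ : ‖φ‖ ≤ 1) :
    ∑' i, (‖φ (x i)‖₊ : ℝ≥0∞) ^ p ≤ (midLpNorm 𝕜 p x) ^ p := by
  have hp0 : 0 < p := lt_trans one_pos hp
  set Φ : ℕ → X →L[𝕜] 𝕜 := fun n => if n = 0 then φ else 0 with hΦ
  have hmem : WeaklyLpSummable 𝕜 p Φ ∧ weakLpNorm 𝕜 p Φ ≤ 1 := by
    constructor
    · intro Ψ
      apply summable_of_ne_finset_zero (s := {0})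
      intro n hn
      simp only [Finset.mem_singleton] at hn
      simp [hΦ, hn, Real.zero_rpow hp0.ne']
    · rw [weakLpNorm]
      apply iSup₂_le
      intro Ψ hΨ
      have : ∑' n, (‖Ψ (Φ n)‖₊ : ℝ≥0∞) ^ p = (‖Ψ φ‖₊ : ℝ≥0∞) ^ p := by
        rw [tsum_eq_single 0]
        · simp [hΦ]
        · intro n hn
          simp [hΦ, hn, ENNReal.zero_rpow_of_pos hp0]
      rw [this, aux_rpow_inv hp0]
      have : ‖Ψ φ‖ ≤ 1 := by
        calc ‖Ψ φ‖ ≤ ‖Ψ‖ * ‖φ‖ := Ψ.le_opNorm φ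
        _ ≤ 1 * 1 := mul_le_mul hΨ hφ (norm_nonneg _) (le_trans (norm_nonneg _) hΨ)
        _ = 1 := one_mul 1
      exact_mod_cast ENNReal.coe_le_one_iff.2 (by exact_mod_cast this)
  have hle : (∑' n, ∑' j, (‖Φ n (x j)‖₊ : ℝ≥0∞) ^ p) ^ (1/p) ≤ midLpNorm 𝕜 p x := by
    rw [midLpNorm]
    exact le_iSup₂ (f := fun (Φ : ℕ → X →L[𝕜] 𝕜) _ =>
      (∑' n, ∑' j, (‖Φ n (x j)‖₊ : ℝ≥0∞) ^ p) ^ (1/p)) Φ hmem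
  have hsum : ∑' n, ∑' j, (‖Φ n (x j)‖₊ : ℝ≥0∞) ^ p = ∑' j, (‖φ (x j)‖₊ : ℝ≥0∞) ^ p := by
    rw [tsum_eq_single 0]
    · simp [hΦ]
    · intro n hn
      simp [hΦ, hn, ENNReal.zero_rpow_of_pos hp0]
  rw [hsum] at hle
  exact aux_le_rpow hp0 hle

lemma mid_tsum_le (hp : 1 < p) (x : ℕ → X) (hx : midLpNorm 𝕜 p x < ⊤)
    (φ : X →L[𝕜] 𝕜) (hφ : ‖φ‖ ≤ 1) :
    Summable (fun i => ‖φ (x i)‖ ^ p) ∧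
      ∑' i, ‖φ (x i)‖ ^ p ≤ ((midLpNorm 𝕜 p x) ^ p).toReal := by
  have hp0 : 0 < p := lt_trans one_pos hp
  have h := single_le_mid hp x φ hφ
  rw [funext (fun i => aux_enn_pow (φ (x i)) hp0.le)] at h
  exact aux_conv (fun i => Real.rpow_nonneg (norm_nonneg _) _)
    (ENNReal.rpow_ne_top_of_nonneg hp0.le hx.ne) h

lemma mid_weakly_summable (hp : 1 < p) (x : ℕ → X) (hx : midLpNorm 𝕜 p x < ⊤) :
    WeaklyLpSummable 𝕜 p x := by
  have hp0 : 0 < p := lt_trans one_pos hp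
  intro φ
  rcases eq_or_ne φ 0 with rfl | hφ0
  · simpa [Real.zero_rpow hp0.ne'] using summable_zero
  have hn : 0 < ‖φ‖ := norm_pos_iff.2 hφ0
  set φ' : X →L[𝕜] 𝕜 := ((‖φ‖⁻¹ : ℝ) : 𝕜) • φ with hφ'
  have hnc : ‖((‖φ‖⁻¹ : ℝ) : 𝕜)‖ = ‖φ‖⁻¹ := by
    rw [RCLike.norm_ofReal, abs_of_nonneg (by positivity)]
  have hφ'1 : ‖φ'‖ ≤ 1 := by
    rw [hφ', show ‖((‖φ‖⁻¹ : ℝ) : 𝕜) • φ‖ = _ from norm_smul ((‖φ‖⁻¹ : ℝ) : 𝕜) φ, hnc, inv_mul_cancel₀ hn.ne']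
  have hs' := (mid_tsum_le hp x hx φ' hφ'1).1
  have heq : (fun i => ‖φ (x i)‖ ^ p) = fun i => ‖φ‖ ^ p * ‖φ' (x i)‖ ^ p := by
    funext i
    have : ‖φ' (x i)‖ = ‖φ‖⁻¹ * ‖φ (x i)‖ := by
      rw [hφ', ContinuousLinearMap.smul_apply,
        show ‖((‖φ‖⁻¹ : ℝ) : 𝕜) • φ (x i)‖ = _ from norm_smul ((‖φ‖⁻¹ : ℝ) : 𝕜) (φ (x i)), hnc]
    rw [this, Real.mul_rpow (by positivity) (norm_nonneg _), ← mul_assoc,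
      ← Real.mul_rpow hn.le (by positivity), mul_inv_cancel₀ hn.ne', Real.one_rpow, one_mul]
  rw [heq]
  exact hs'.mul_left _

lemma le_weak (hp : 1 < p) (a : ℕ → X) (φ : X →L[𝕜] 𝕜) (hφ : ‖φ‖ ≤ 1) :
    ∑' j, (‖φ (a j)‖₊ : ℝ≥0∞) ^ p ≤ (weakLpNorm 𝕜 p a) ^ p := by
  have hp0 : 0 < p := lt_trans one_pos hp
  refine aux_le_rpow hp0 ?_
  rw [weakLpNorm]
  exact le_iSup₂ (f := fun (φ : X →L[𝕜] 𝕜) _ =>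
    (∑' j, (‖φ (a j)‖₊ : ℝ≥0∞) ^ p) ^ (1/p)) φ hφ

lemma weak_bound (hp : 1 < p) (a : ℕ → X) (ψ : X →L[𝕜] 𝕜) :
    ∑' j, (‖ψ (a j)‖₊ : ℝ≥0∞) ^ p ≤ (‖ψ‖₊ : ℝ≥0∞) ^ p * (weakLpNorm 𝕜 p a) ^ p := by
  have hp0 : 0 < p := lt_trans one_pos hp
  rcases eq_or_ne ψ 0 with rfl | hψ0
  · simp [ENNReal.zero_rpow_of_pos hp0]
  have hn : 0 < ‖ψ‖ := norm_pos_iff.2 hψ0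
  set ψ' : X →L[𝕜] 𝕜 := ((‖ψ‖⁻¹ : ℝ) : 𝕜) • ψ with hψ'
  have hnc : ‖((‖ψ‖⁻¹ : ℝ) : 𝕜)‖ = ‖ψ‖⁻¹ := by
    rw [RCLike.norm_ofReal, abs_of_nonneg (by positivity)]
  have hψ'1 : ‖ψ'‖ ≤ 1 := by
    rw [hψ', show ‖((‖ψ‖⁻¹ : ℝ) : 𝕜) • ψ‖ = _ from norm_smul ((‖ψ‖⁻¹ : ℝ) : 𝕜) ψ, hnc,
      inv_mul_cancel₀ hn.ne']
  have key : ∀ j, (‖ψ (a j)‖₊ : ℝ≥0∞) = (‖ψ‖₊ : ℝ≥0∞) * (‖ψ' (a j)‖₊ : ℝ≥0∞) := by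
    intro j
    have : ‖ψ' (a j)‖ = ‖ψ‖⁻¹ * ‖ψ (a j)‖ := by
      rw [hψ', ContinuousLinearMap.smul_apply,
        show ‖((‖ψ‖⁻¹ : ℝ) : 𝕜) • ψ (a j)‖ = _ from norm_smul ((‖ψ‖⁻¹ : ℝ) : 𝕜) (ψ (a j)), hnc]
    have h2 : ‖ψ (a j)‖ = ‖ψ‖ * ‖ψ' (a j)‖ := by
      rw [this, ← mul_assoc, mul_inv_cancel₀ hn.ne', one_mul]
    rw [← ENNReal.coe_mul]
    norm_cast
    ext
    push_cast
    simpa using h2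
  calc ∑' j, (‖ψ (a j)‖₊ : ℝ≥0∞) ^ p
      = ∑' j, ((‖ψ‖₊ : ℝ≥0∞) ^ p * (‖ψ' (a j)‖₊ : ℝ≥0∞) ^ p) := by
        refine tsum_congr fun j => ?_
        rw [key j, ENNReal.mul_rpow_of_nonneg _ _ hp0.le]
    _ = (‖ψ‖₊ : ℝ≥0∞) ^ p * ∑' j, (‖ψ' (a j)‖₊ : ℝ≥0∞) ^ p := ENNReal.tsum_mul_left
    _ ≤ (‖ψ‖₊ : ℝ≥0∞) ^ p * (weakLpNorm 𝕜 p a) ^ p := by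
        gcongr
        exact le_weak hp a ψ' hψ'1

lemma weak_lt_top (hp : 1 < p) (a : ℕ → X) (ha : WeaklyLpSummable 𝕜 p a) :
    weakLpNorm 𝕜 p a < ⊤ := by
  have hp0 : 0 < p := lt_trans one_pos hp
  haveI : Fact (1 ≤ ENNReal.ofReal p) := ⟨by
    rw [← ENNReal.ofReal_one]; exact ENNReal.ofReal_le_ofReal hp.le⟩
  set P := ENNReal.ofReal p with hP
  have htr : P.toReal = p := ENNReal.toReal_ofReal hp0.le
  have htrpos : 0 < P.toReal := by rw [htr]; exact hp0
  -- truncation operators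
  have hmem : ∀ (F : Finset ℕ) (φ : X →L[𝕜] 𝕜),
      Memℓp (fun j => if j ∈ F then φ (a j) else 0) P := by
    intro F φ
    apply memℓp_gen
    apply summable_of_ne_finset_zero (s := F)
    intro j hj
    simp [hj, htr, Real.zero_rpow hp0.ne']
  have htsum : ∀ (F : Finset ℕ) (φ : X →L[𝕜] 𝕜),
      ∑' j, ‖if j ∈ F then φ (a j) else 0‖ ^ p = ∑ j ∈ F, ‖φ (a j)‖ ^ p := by
    intro F φ
    rw [tsum_eq_sum (s := F) (fun j hj => by simp [hj, Real.zero_rpow hp0.ne'])]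
    exact Finset.sum_congr rfl fun j hj => by simp [hj]
  set T : Finset ℕ → (X →L[𝕜] 𝕜) →L[𝕜] lp (fun _ : ℕ => 𝕜) P := fun F =>
    LinearMap.mkContinuous
      { toFun := fun φ => (⟨fun j => if j ∈ F then φ (a j) else 0, hmem F φ⟩ : lp (fun _ : ℕ => 𝕜) P)
        map_add' := by
          intro φ ψ
          apply lp.ext
          funext j
          by_cases hj : j ∈ F <;> simp [hj] <;> erw [Pi.add_apply] <;> simp [hj]
        map_smul' := by
          intro k φ
          apply lp.ext
          funext j
          by_cases hj : j ∈ F <;> simp [hj] }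
      ((∑ j ∈ F, ‖a j‖ ^ p) ^ (1/p))
      (by
        intro φ
        have hMF : 0 ≤ (∑ j ∈ F, ‖a j‖ ^ p) ^ (1/p) :=
          Real.rpow_nonneg (Finset.sum_nonneg fun j _ => Real.rpow_nonneg (norm_nonneg _) _) _
        apply lp.norm_le_of_tsum_le htrpos (by positivity)
        simp only [htr]
        refine le_of_le_of_eq (le_of_eq_of_le (by exact htsum F φ) ?_) rfl
        have hterm : ∀ j ∈ F, ‖φ (a j)‖ ^ p ≤ (‖a j‖ ^ p) * ‖φ‖ ^ p := by
          intro j _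
          calc ‖φ (a j)‖ ^ p ≤ (‖φ‖ * ‖a j‖) ^ p :=
                Real.rpow_le_rpow (norm_nonneg _) (φ.le_opNorm (a j)) hp0.le
          _ = (‖a j‖ ^ p) * ‖φ‖ ^ p := by
              rw [Real.mul_rpow (norm_nonneg _) (norm_nonneg _), mul_comm]
        calc ∑ j ∈ F, ‖φ (a j)‖ ^ p ≤ ∑ j ∈ F, (‖a j‖ ^ p) * ‖φ‖ ^ p :=
              Finset.sum_le_sum hterm
        _ = (∑ j ∈ F, ‖a j‖ ^ p) * ‖φ‖ ^ p := by rw [← Finset.sum_mul]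
        _ = ((∑ j ∈ F, ‖a j‖ ^ p) ^ (1/p) * ‖φ‖) ^ p := by
            rw [Real.mul_rpow hMF (norm_nonneg _),
              rpow_inv_real (Finset.sum_nonneg fun j _ => Real.rpow_nonneg (norm_nonneg _) _) hp0]) with hT
  -- pointwise bound
  have hpt : ∀ φ : X →L[𝕜] 𝕜, ∃ C, ∀ F : Finset ℕ, ‖T F φ‖ ≤ C := by
    intro φ
    refine ⟨(∑' j, ‖φ (a j)‖ ^ p) ^ (1/p), fun F => ?_⟩
    have h0 : 0 ≤ (∑' j, ‖φ (a j)‖ ^ p) ^ (1/p) :=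
      Real.rpow_nonneg (tsum_nonneg fun j => Real.rpow_nonneg (norm_nonneg _) _) _
    apply lp.norm_le_of_tsum_le htrpos h0
    simp only [htr]
    refine le_of_eq_of_le (by exact htsum F φ) ?_
    rw [rpow_inv_real (tsum_nonneg fun j => Real.rpow_nonneg (norm_nonneg _) _) hp0]
    exact Summable.sum_le_tsum F (fun j _ => Real.rpow_nonneg (norm_nonneg _) _) (ha φ)
  obtain ⟨C, hC⟩ := banach_steinhaus hpt
  set C' := max C 0 with hC'
  have hC'0 : 0 ≤ C' := le_max_right _ _
  -- final bound
  have hball : ∀ φ : X →L[𝕜] 𝕜, ‖φ‖ ≤ 1 → ∑' j, ‖φ (a j)‖ ^ p ≤ C' ^ p := by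
    intro φ hφ
    apply Summable.tsum_le_of_sum_le (ha φ)
    intro F
    have h1 : ‖T F φ‖ ≤ C' := by
      calc ‖T F φ‖ ≤ ‖T F‖ * ‖φ‖ := (T F).le_opNorm φ
      _ ≤ C' * 1 := mul_le_mul ((hC F).trans (le_max_left _ _)) hφ (norm_nonneg _)
          (le_trans (norm_nonneg _) ((hC F).trans (le_max_left _ _)))
      _ = C' := mul_one _
    have h2 : ∑ j ∈ F, ‖φ (a j)‖ ^ p = ‖T F φ‖ ^ P.toReal := by
      rw [lp.norm_rpow_eq_tsum htrpos, htr, hT]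
      simp only [LinearMap.mkContinuous_apply, LinearMap.coe_mk, AddHom.coe_mk]
      rw [htsum F φ]
    rw [h2, htr]
    exact Real.rpow_le_rpow (norm_nonneg _) h1 hp0.le
  have : weakLpNorm 𝕜 p a ≤ ENNReal.ofReal C' := by
    rw [weakLpNorm]
    apply iSup₂_le
    intro φ hφ
    have : ∑' j, (‖φ (a j)‖₊ : ℝ≥0∞) ^ p ≤ ENNReal.ofReal (C' ^ p) := by
      rw [funext fun j => aux_enn_pow (φ (a j)) hp0.le,
        aux_conv2 (fun j => Real.rpow_nonneg (norm_nonneg _) _) (ha φ)]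
      exact ENNReal.ofReal_le_ofReal (hball φ hφ)
    calc (∑' j, (‖φ (a j)‖₊ : ℝ≥0∞) ^ p) ^ (1/p) ≤ (ENNReal.ofReal (C' ^ p)) ^ (1/p) :=
          ENNReal.rpow_le_rpow this (by positivity)
    _ = ENNReal.ofReal C' := by
        rw [ENNReal.ofReal_rpow_of_nonneg (by positivity) (by positivity),
          rpow_inv_real' hC'0 hp0]
  exact lt_of_le_of_lt this ENNReal.ofReal_lt_top

lemma series_summable [CompleteSpace X] (hp : 1 < p) (x : ℕ → X)
    (hx : midLpNorm 𝕜 p x < ⊤) (t : ℕ → 𝕜)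
    (ht : Summable fun i => ‖t i‖ ^ (p / (p - 1))) :
    Summable fun i => t i • x i := by
  have hp0 : 0 < p := lt_trans one_pos hp
  set q := p / (p - 1) with hq
  have hpq : p.HolderConjugate q := Real.HolderConjugate.conjExponent hp
  have hq0 : 0 < q := hpq.symm.pos
  set Cp := ((midLpNorm 𝕜 p x) ^ p).toReal with hCp
  have hCp0 : 0 ≤ Cp := ENNReal.toReal_nonneg
  have hb : ∀ s : Finset ℕ, ‖∑ i ∈ s, t i • x i‖ ≤
      (∑ i ∈ s, ‖t i‖ ^ q) ^ (1/q) * Cp ^ (1/p) := by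
    intro s
    obtain ⟨φ, hφ1, hφv⟩ := exists_dual_vector'' 𝕜 (∑ i ∈ s, t i • x i)
    have hv : ‖∑ i ∈ s, t i • x i‖ = ‖φ (∑ i ∈ s, t i • x i)‖ := by
      rw [hφv, RCLike.norm_ofReal, abs_of_nonneg (norm_nonneg _)]
    rw [hv, map_sum]
    have hsum2 : ∑ i ∈ s, ‖φ (x i)‖ ^ p ≤ Cp :=
      le_trans (Summable.sum_le_tsum s (fun i _ => Real.rpow_nonneg (norm_nonneg _) _)
        (mid_tsum_le hp x hx φ hφ1).1) (mid_tsum_le hp x hx φ hφ1).2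
    calc ‖∑ i ∈ s, φ (t i • x i)‖ ≤ ∑ i ∈ s, ‖t i‖ * ‖φ (x i)‖ := by
          refine (norm_sum_le _ _).trans (Finset.sum_le_sum fun i hi => ?_)
          rw [map_smul, smul_eq_mul, norm_mul]
      _ ≤ (∑ i ∈ s, ‖t i‖ ^ q) ^ (1/q) * (∑ i ∈ s, ‖φ (x i)‖ ^ p) ^ (1/p) := by
          have := Real.inner_le_Lp_mul_Lq_of_nonneg (s := s) hpq.symm
            (f := fun i => ‖t i‖) (g := fun i => ‖φ (x i)‖)
            (fun i _ => norm_nonneg _) (fun i _ => norm_nonneg _)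
          simpa using this
      _ ≤ (∑ i ∈ s, ‖t i‖ ^ q) ^ (1/q) * Cp ^ (1/p) := by
          apply mul_le_mul_of_nonneg_left
            (Real.rpow_le_rpow (Finset.sum_nonneg fun i _ =>
              Real.rpow_nonneg (norm_nonneg _) _) hsum2 (by positivity))
            (Real.rpow_nonneg (Finset.sum_nonneg fun i _ => Real.rpow_nonneg (norm_nonneg _) _) _)
  rw [summable_iff_vanishing]
  intro e he
  obtain ⟨ε, hε, hball⟩ := Metric.mem_nhds_iff.1 he
  set K := Cp ^ (1/p) + 1 with hKdef
  have hK : 0 < K := by positivity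
  have hKgt : Cp ^ (1/p) < K := lt_add_one _
  obtain ⟨s, hs⟩ := ht.vanishing (Metric.ball_mem_nhds (0 : ℝ) (by positivity : (0:ℝ) < (ε/K) ^ q))
  refine ⟨s, fun u hu => ?_⟩
  apply hball
  rw [Metric.mem_ball, dist_zero_right]
  have h1 := hs u hu
  rw [Metric.mem_ball, dist_zero_right, Real.norm_eq_abs] at h1
  have h2 : ∑ i ∈ u, ‖t i‖ ^ q ≤ (ε/K) ^ q := ((le_abs_self _).trans_lt h1).le
  calc ‖∑ i ∈ u, t i • x i‖ ≤ (∑ i ∈ u, ‖t i‖ ^ q) ^ (1/q) * Cp ^ (1/p) := hb u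
    _ ≤ ((ε/K) ^ q) ^ (1/q) * Cp ^ (1/p) := by
        apply mul_le_mul_of_nonneg_right
          (Real.rpow_le_rpow (Finset.sum_nonneg fun i _ =>
            Real.rpow_nonneg (norm_nonneg _) _) h2 (by positivity))
          (Real.rpow_nonneg hCp0 _)
    _ = (ε/K) * Cp ^ (1/p) := by rw [rpow_inv_real' (by positivity) hq0]
    _ < (ε/K) * K := by
        apply mul_lt_mul_of_pos_left hKgt (by positivity)
    _ = ε := div_mul_cancel₀ ε hK.ne'

end

section
variable {𝕜 : Type*} [RCLike 𝕜] {p : ℝ}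

lemma dual_construct (hp : 1 < p) [Fact (1 ≤ ENNReal.ofReal (p / (p - 1)))]
    (b : ℕ → 𝕜) (hb : Summable fun i => ‖b i‖ ^ p) :
    ∃ ψ : lp (fun _ : ℕ => 𝕜) (ENNReal.ofReal (p / (p - 1))) →L[𝕜] 𝕜,
      (∀ c, ψ c = ∑' i, b i * c i) ∧ ‖ψ‖ ≤ (∑' i, ‖b i‖ ^ p) ^ (1/p) := by
  have hpq : p.HolderConjugate (p / (p - 1)) := Real.HolderConjugate.conjExponent hp
  set q := p / (p - 1) with hqdef
  have hq0 : 0 < q := hpq.symm.pos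
  have htr : (ENNReal.ofReal q).toReal = q := ENNReal.toReal_ofReal hq0.le
  set B := (∑' i, ‖b i‖ ^ p) ^ (1/p) with hB
  have hB0 : 0 ≤ B := Real.rpow_nonneg (tsum_nonneg fun i => Real.rpow_nonneg (norm_nonneg _) _) _
  have key : ∀ c : lp (fun _ : ℕ => 𝕜) (ENNReal.ofReal q),
      (Summable fun i => ‖b i‖ * ‖c i‖) ∧ ∑' i, ‖b i‖ * ‖c i‖ ≤ B * ‖c‖ := by
    intro c
    have hcs : Summable fun i => ‖c i‖ ^ q := by
      have := (lp.memℓp c).summable (by rw [htr]; exact hq0)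
      rwa [htr] at this
    obtain ⟨hsum, hle⟩ := Real.summable_and_inner_le_Lp_mul_Lq_tsum_of_nonneg hpq
      (fun i => norm_nonneg (b i)) (fun i => norm_nonneg (c i)) hb hcs
    refine ⟨hsum, hle.trans_eq ?_⟩
    congr 1
    rw [lp.norm_eq_tsum_rpow (by rw [htr]; exact hq0) c, htr]
  have hsummul : ∀ c : lp (fun _ : ℕ => 𝕜) (ENNReal.ofReal q),
      Summable fun i => b i * c i := by
    intro c
    refine Summable.of_norm ?_
    simpa [norm_mul] using (key c).1
  set L : lp (fun _ : ℕ => 𝕜) (ENNReal.ofReal q) →ₗ[𝕜] 𝕜 :=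
    { toFun := fun c => ∑' i, b i * c i
      map_add' := by
        intro c d
        simp only [lp.coeFn_add, Pi.add_apply]
        rw [← Summable.tsum_add (hsummul c) (hsummul d)]
        exact tsum_congr fun i => mul_add _ _ _
      map_smul' := by
        intro k c
        simp only [lp.coeFn_smul, Pi.smul_apply, smul_eq_mul, RingHom.id_apply]
        rw [← tsum_mul_left]
        exact tsum_congr fun i => mul_left_comm _ _ _ } with hL
  refine ⟨L.mkContinuous B (fun c => ?_), fun c => rfl, L.mkContinuous_norm_le hB0 _⟩
  calc ‖∑' i, b i * c i‖ ≤ ∑' i, ‖b i * c i‖ := norm_tsum_le_tsum_norm (by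
        simpa [norm_mul] using (key c).1)
    _ = ∑' i, ‖b i‖ * ‖c i‖ := by simp [norm_mul]
    _ ≤ B * ‖c‖ := (key c).2

end

/-- If `(x_i)` is mid `p`-summable in `E` and `(a_j)` is a weakly
`p`-summable sequence in `ℓ_{p*}` (`1 < p < ∞`, `p* = p/(p-1)`), then each series
`∑_i a_{j,i} x_i` converges, the resulting sequence is mid `p`-summable, and its mid
`p`-norm is at most `‖(a_j)‖_{w,p} ⬝ ‖(x_i)‖_{mid,p}`. -/
theorem stmt_11 {𝕜 : Type*} [RCLike 𝕜] {E : Type*} [NormedAddCommGroup E] [NormedSpace 𝕜 E]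
    [CompleteSpace E] {p : ℝ} (hp : 1 < p) [Fact (1 ≤ ENNReal.ofReal (p / (p - 1)))]
    (x : ℕ → E) (hx : midLpNorm 𝕜 p x < ⊤)
    (a : ℕ → lp (fun _ : ℕ => 𝕜) (ENNReal.ofReal (p / (p - 1)))) (ha : WeaklyLpSummable 𝕜 p a) :
    ∃ y : ℕ → E,
      (∀ j, Tendsto (fun m => ∑ i ∈ Finset.range m, a j i • x i) atTop (𝓝 (y j))) ∧
      midLpNorm 𝕜 p y < ⊤ ∧
      midLpNorm 𝕜 p y ≤ weakLpNorm 𝕜 p a * midLpNorm 𝕜 p x := by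
  have hp0 : 0 < p := lt_trans one_pos hp
  have hpq : p.HolderConjugate (p / (p - 1)) := Real.HolderConjugate.conjExponent hp
  have hq0 : 0 < p / (p - 1) := hpq.symm.pos
  have htrq : (ENNReal.ofReal (p / (p - 1))).toReal = p / (p - 1) := ENNReal.toReal_ofReal hq0.le
  -- summability of each series
  have hts : ∀ j, Summable fun i => ‖a j i‖ ^ (p / (p - 1)) := by
    intro j
    have := (lp.memℓp (a j)).summable (by rw [htrq]; exact hq0)
    rwa [htrq] at this
  have hsum : ∀ j, Summable fun i => a j i • x i := fun j =>
    series_summable hp x hx (a j) (hts j)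
  set y : ℕ → E := fun j => ∑' i, a j i • x i with hy
  have hW : weakLpNorm 𝕜 p a < ⊤ := weak_lt_top hp a ha
  -- the main bound
  have hbound : midLpNorm 𝕜 p y ≤ weakLpNorm 𝕜 p a * midLpNorm 𝕜 p x := by
    rw [midLpNorm]
    apply iSup₂_le
    rintro Φ ⟨hΦw, hΦ1⟩
    -- construct the dual functionals
    have H : ∀ n, ∃ ψ : lp (fun _ : ℕ => 𝕜) (ENNReal.ofReal (p / (p - 1))) →L[𝕜] 𝕜,
        (∀ c, ψ c = ∑' i, Φ n (x i) * c i) ∧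
        ‖ψ‖ ≤ (∑' i, ‖Φ n (x i)‖ ^ p) ^ (1/p) := fun n =>
      dual_construct hp (fun i => Φ n (x i)) (mid_weakly_summable hp x hx (Φ n))
    choose ψ hψap hψn using H
    have key1 : ∀ n j, Φ n (y j) = ψ n (a j) := by
      intro n j
      rw [hψap n (a j), hy]
      rw [ContinuousLinearMap.map_tsum _ (hsum j)]
      exact tsum_congr fun i => by rw [map_smul, smul_eq_mul, mul_comm]
    have key2 : ∀ n, (‖ψ n‖₊ : ℝ≥0∞) ^ p ≤ ∑' i, (‖Φ n (x i)‖₊ : ℝ≥0∞) ^ p := by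
      intro n
      have hs := mid_weakly_summable hp x hx (Φ n)
      have h1 : (‖ψ n‖₊ : ℝ≥0∞) ≤ ENNReal.ofReal ((∑' i, ‖Φ n (x i)‖ ^ p) ^ (1/p)) := by
        rw [← ENNReal.ofReal_coe_nnreal, coe_nnnorm]
        exact ENNReal.ofReal_le_ofReal (hψn n)
      calc (‖ψ n‖₊ : ℝ≥0∞) ^ p ≤ (ENNReal.ofReal ((∑' i, ‖Φ n (x i)‖ ^ p) ^ (1/p))) ^ p :=
            ENNReal.rpow_le_rpow h1 hp0.le
        _ = ENNReal.ofReal (∑' i, ‖Φ n (x i)‖ ^ p) := by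
            rw [ENNReal.ofReal_rpow_of_nonneg (Real.rpow_nonneg (tsum_nonneg fun i =>
                Real.rpow_nonneg (norm_nonneg _) _) _) hp0.le,
              rpow_inv_real (tsum_nonneg fun i => Real.rpow_nonneg (norm_nonneg _) _) hp0]
        _ = ∑' i, (‖Φ n (x i)‖₊ : ℝ≥0∞) ^ p := by
            rw [funext fun i => aux_enn_pow (Φ n (x i)) hp0.le,
              aux_conv2 (fun i => Real.rpow_nonneg (norm_nonneg _) _) hs]
    have hmidx : ∑' n, ∑' i, (‖Φ n (x i)‖₊ : ℝ≥0∞) ^ p ≤ (midLpNorm 𝕜 p x) ^ p := by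
      refine aux_le_rpow hp0 ?_
      rw [midLpNorm]
      exact le_iSup₂ (f := fun (Φ : ℕ → E →L[𝕜] 𝕜) _ =>
        (∑' n, ∑' i, (‖Φ n (x i)‖₊ : ℝ≥0∞) ^ p) ^ (1/p)) Φ ⟨hΦw, hΦ1⟩
    have main : ∑' n, ∑' j, (‖Φ n (y j)‖₊ : ℝ≥0∞) ^ p ≤
        (weakLpNorm 𝕜 p a * midLpNorm 𝕜 p x) ^ p := by
      calc ∑' n, ∑' j, (‖Φ n (y j)‖₊ : ℝ≥0∞) ^ p
          = ∑' n, ∑' j, (‖ψ n (a j)‖₊ : ℝ≥0∞) ^ p := by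
            exact tsum_congr fun n => tsum_congr fun j => by rw [key1 n j]
        _ ≤ ∑' n, (‖ψ n‖₊ : ℝ≥0∞) ^ p * (weakLpNorm 𝕜 p a) ^ p :=
            ENNReal.tsum_le_tsum fun n => weak_bound hp a (ψ n)
        _ = (∑' n, (‖ψ n‖₊ : ℝ≥0∞) ^ p) * (weakLpNorm 𝕜 p a) ^ p := ENNReal.tsum_mul_right
        _ ≤ (∑' n, ∑' i, (‖Φ n (x i)‖₊ : ℝ≥0∞) ^ p) * (weakLpNorm 𝕜 p a) ^ p := by
            exact mul_le_mul_left (ENNReal.tsum_le_tsum key2) _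
        _ ≤ (midLpNorm 𝕜 p x) ^ p * (weakLpNorm 𝕜 p a) ^ p := by
            exact mul_le_mul_left hmidx _
        _ = (weakLpNorm 𝕜 p a * midLpNorm 𝕜 p x) ^ p := by
            rw [ENNReal.mul_rpow_of_nonneg _ _ hp0.le, mul_comm]
    calc (∑' n, ∑' j, (‖Φ n (y j)‖₊ : ℝ≥0∞) ^ p) ^ (1/p)
        ≤ ((weakLpNorm 𝕜 p a * midLpNorm 𝕜 p x) ^ p) ^ (1/p) :=
          ENNReal.rpow_le_rpow main (by positivity)
      _ = weakLpNorm 𝕜 p a * midLpNorm 𝕜 p x := aux_rpow_inv hp0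
  refine ⟨y, fun j => ?_, lt_of_le_of_lt hbound ?_, hbound⟩
  · exact (hsum j).hasSum.tendsto_sum_nat
  · exact ENNReal.mul_lt_top hW hx
end

section
/- Let F be a Banach space, 1 < p < ∞, p* = p/(p−1), and let u : ℓ_{p*} → F be a bounded linear operator. Then the following are equivalent: (i) for every weakly p-summable sequence (y_j)_{j=1}^∞ in ℓ_{p*}, lim_{j→∞} ‖u(y_j)‖ = 0; (ii) for every weakly p-summable sequence (y_j)_{j=1}^∞ in ℓ_{p*}, the sequence (u(y_j))_{j=1}^∞ is unconditionally p-summable in F. -/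
open Filter Topology
open scoped ENNReal NNReal

section Aux

variable {𝕜 : Type*} [RCLike 𝕜] {X : Type*} [NormedAddCommGroup X] [NormedSpace 𝕜 X]

/-- The norm of the first term is dominated by the weak `ℓ_p` norm. -/
lemma norm_head_le_weakLpNorm {p : ℝ} (hp : 0 < p) (x : ℕ → X) :
    (‖x 0‖₊ : ℝ≥0∞) ≤ weakLpNorm 𝕜 p x := by
  rcases eq_or_ne (x 0) 0 with h0 | h0
  · simp [h0]
  obtain ⟨g, hg1, hgx⟩ := exists_dual_vector 𝕜 (x 0) (norm_ne_zero_iff.mpr h0)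
  have hgmem : g ∈ {φ : X →L[𝕜] 𝕜 | ‖φ‖ ≤ 1} := le_of_eq hg1
  have hterm : ((‖g (x 0)‖₊ : ℝ≥0∞) ^ p) ^ (1 / p) ≤ weakLpNorm 𝕜 p x := by
    refine le_trans ?_ (le_iSup₂ (f := fun (φ : X →L[𝕜] 𝕜) (_ : φ ∈ {φ : X →L[𝕜] 𝕜 | ‖φ‖ ≤ 1}) =>
      (∑' j, (‖φ (x j)‖₊ : ℝ≥0∞) ^ p) ^ (1 / p)) g hgmem)
    exact ENNReal.rpow_le_rpow (ENNReal.le_tsum 0) (by positivity)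
  have hcanc : ((‖g (x 0)‖₊ : ℝ≥0∞) ^ p) ^ (1 / p) = (‖g (x 0)‖₊ : ℝ≥0∞) := by
    rw [← ENNReal.rpow_mul, mul_one_div_cancel hp.ne', ENNReal.rpow_one]
  have hnorm : ‖g (x 0)‖₊ = ‖x 0‖₊ := by
    have : ‖g (x 0)‖ = ‖x 0‖ := by rw [hgx, RCLike.norm_ofReal, abs_of_nonneg (norm_nonneg _)]
    ext
    simpa using this
  rwa [hcanc, hnorm] at hterm

/-- If the tails' weak `ℓ_p` norms tend to zero, the norms tend to zero. -/
lemma tendsto_norm_of_tail {p : ℝ} (hp : 0 < p) (x : ℕ → X)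
    (h : Tendsto (fun n : ℕ => weakLpNorm 𝕜 p fun j => x (n + j)) atTop (𝓝 (0 : ℝ≥0∞))) :
    Tendsto (fun j => ‖x j‖) atTop (𝓝 0) := by
  have hb : ∀ n : ℕ, (‖x n‖₊ : ℝ≥0∞) ≤ weakLpNorm 𝕜 p fun j => x (n + j) := fun n => by
    simpa using norm_head_le_weakLpNorm (𝕜 := 𝕜) hp (fun j => x (n + j))
  have h1 : Tendsto (fun n : ℕ => (‖x n‖₊ : ℝ≥0∞)) atTop (𝓝 0) := by
    rw [ENNReal.tendsto_nhds_zero] at h ⊢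
    exact fun ε hε => (h ε hε).mono fun n hn => le_trans (hb n) hn
  rw [← ENNReal.coe_zero, ENNReal.tendsto_coe] at h1
  have h2 : Tendsto (fun n : ℕ => ((‖x n‖₊ : ℝ≥0) : ℝ)) atTop (𝓝 ((0 : ℝ≥0) : ℝ)) :=
    (NNReal.tendsto_coe).mpr h1
  simpa using h2

end Aux


/-- Hard direction: if `‖u yⱼ‖ → 0` for every weakly `p`-summable sequence, then the image of
every weakly `p`-summable sequence is unconditionally `p`-summable. -/
lemma hard_direction {𝕜 : Type*} [RCLike 𝕜] {X F : Type*} [NormedAddCommGroup X]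
    [NormedSpace 𝕜 X] [NormedAddCommGroup F] [NormedSpace 𝕜 F] {p : ℝ} (hp : 1 < p)
    (u : X →L[𝕜] F)
    (h : ∀ y : ℕ → X, WeaklyLpSummable 𝕜 p y → Tendsto (fun j => ‖u (y j)‖) atTop (𝓝 0))
    (y : ℕ → X) (hy : WeaklyLpSummable 𝕜 p y) :
    UncondLpSummable 𝕜 p fun j => u (y j) := by
  have hp0 : (0:ℝ) < p := lt_trans one_pos hp
  have hp1 : p - 1 ≠ 0 := by linarith
  have hweak : WeaklyLpSummable 𝕜 p fun j => u (y j) := fun φ => by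
    simpa using hy (φ.comp u)
  refine ⟨hweak, ?_⟩
  set W : ℕ → ℝ≥0∞ := fun n => weakLpNorm 𝕜 p fun j => u (y (n + j)) with hWdef
  show Tendsto W atTop (𝓝 0)
  -- W is antitone
  have hanti : Antitone W := by
    intro a b hab
    refine iSup₂_mono fun φ hφ => ?_
    refine ENNReal.rpow_le_rpow ?_ (by positivity)
    obtain ⟨d, rfl⟩ := Nat.exists_eq_add_of_le hab
    calc ∑' j, (‖φ (u (y (a + d + j)))‖₊ : ℝ≥0∞) ^ p
        = ∑' j, (fun i => (‖φ (u (y (a + i)))‖₊ : ℝ≥0∞) ^ p) (d + j) := by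
          simp [add_assoc]
      _ ≤ _ := ENNReal.tsum_comp_le_tsum_of_injective (fun i j hij => by omega) _
  by_contra hcon
  have hlim : Tendsto W atTop (𝓝 (⨅ n, W n)) := tendsto_atTop_iInf hanti
  have hInf : (⨅ n, W n) ≠ 0 := fun h0 => hcon (h0 ▸ hlim)
  obtain ⟨r, hr0, hrI⟩ : ∃ r : ℝ≥0, 0 < r ∧ (r : ℝ≥0∞) < ⨅ n, W n := by
    obtain ⟨r, h1, h2⟩ := ENNReal.lt_iff_exists_nnreal_btwn.mp (pos_iff_ne_zero.mpr hInf)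
    exact ⟨r, by exact_mod_cast h1, h2⟩
  have hrR : (0:ℝ) < (r:ℝ) := hr0
  -- for every n, a functional and a finite block witnessing largeness
  have key : ∀ n : ℕ, ∃ (φ : F →L[𝕜] 𝕜) (m : ℕ), ‖φ‖ ≤ 1 ∧
      (r : ℝ) ^ p < ∑ j ∈ Finset.range m, ‖φ (u (y (n + j)))‖ ^ p := by
    intro n
    have h1 : (r : ℝ≥0∞) < W n := lt_of_lt_of_le hrI (iInf_le _ n)
    rw [hWdef] at h1
    simp only [weakLpNorm, lt_iSup_iff, Set.mem_setOf_eq] at h1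
    obtain ⟨φ, hφ, h1⟩ := h1
    have h2 : (r : ℝ≥0∞) ^ p < ∑' j, (‖φ (u (y (n + j)))‖₊ : ℝ≥0∞) ^ p := by
      have h3 := ENNReal.rpow_lt_rpow h1 hp0
      rwa [← ENNReal.rpow_mul, one_div, inv_mul_cancel₀ hp0.ne', ENNReal.rpow_one] at h3
    rw [ENNReal.tsum_eq_iSup_sum, lt_iSup_iff] at h2
    obtain ⟨s, hs⟩ := h2
    refine ⟨φ, s.sup id + 1, hφ, ?_⟩
    have hsub : s ⊆ Finset.range (s.sup id + 1) := fun i hi =>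
      Finset.mem_range.mpr (Nat.lt_succ_of_le (Finset.le_sup (f := id) hi))
    have h3 : (r : ℝ≥0∞) ^ p <
        ∑ j ∈ Finset.range (s.sup id + 1), (‖φ (u (y (n + j)))‖₊ : ℝ≥0∞) ^ p :=
      hs.trans_le (Finset.sum_le_sum_of_subset hsub)
    have h4 : ((r ^ p : ℝ≥0) : ℝ≥0∞) <
        ((∑ j ∈ Finset.range (s.sup id + 1), ‖φ (u (y (n + j)))‖₊ ^ p : ℝ≥0) : ℝ≥0∞) := by
      rw [ENNReal.coe_rpow_of_nonneg _ hp0.le, ENNReal.coe_finset_sum]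
      simpa [ENNReal.coe_rpow_of_nonneg _ hp0.le] using h3
    have h5 := ENNReal.coe_lt_coe.mp h4
    have h6 := NNReal.coe_lt_coe.mpr h5
    rw [NNReal.coe_rpow, NNReal.coe_sum] at h6
    simpa [NNReal.coe_rpow, coe_nnnorm] using h6
  choose Φ M hΦ hM using key
  -- the block starting points
  let N : ℕ → ℕ := fun k => Nat.rec 0 (fun _ acc => acc + M acc) k
  have hN : ∀ k, N (k + 1) = N k + M (N k) := fun k => rfl
  have hN0 : N 0 = 0 := rfl
  -- notation
  set v : ℕ → ℕ → 𝕜 := fun n j => Φ n (u (y (n + j))) with hvdef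
  set S : ℕ → ℝ := fun n => ∑ j ∈ Finset.range (M n), ‖v n j‖ ^ p with hSdef
  have hSlt : ∀ n, (r : ℝ) ^ p < S n := hM
  have hSpos : ∀ n, 0 < S n := fun n =>
    lt_trans (Real.rpow_pos_of_pos hrR p) (hSlt n)
  set c : ℕ → ℕ → 𝕜 := fun n j => ((‖v n j‖ ^ (p - 2) : ℝ) : 𝕜) * (starRingEnd 𝕜) (v n j)
    with hcdef
  have hc_norm : ∀ n j, ‖c n j‖ = ‖v n j‖ ^ (p - 1) := by
    intro n j
    rcases eq_or_ne (v n j) 0 with hv | hv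
    · rw [hcdef]
      simp [hv, Real.zero_rpow (show p - 1 ≠ 0 from hp1)]
    · have h0 : 0 < ‖v n j‖ := norm_pos_iff.mpr hv
      rw [hcdef]
      simp only [norm_mul, RCLike.norm_ofReal, RCLike.norm_conj,
        abs_of_nonneg (Real.rpow_nonneg (norm_nonneg _) _)]
      rw [← Real.rpow_add_one h0.ne' (p - 2)]
      congr 1
      ring
  have hc_mul : ∀ n j, c n j * v n j = ((‖v n j‖ ^ p : ℝ) : 𝕜) := by
    intro n j
    rcases eq_or_ne (v n j) 0 with hv | hv
    · rw [hcdef]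
      simp [hv, Real.zero_rpow hp0.ne']
    · have h0 : 0 < ‖v n j‖ := norm_pos_iff.mpr hv
      rw [hcdef, mul_assoc, RCLike.conj_mul]
      have h2 : (‖v n j‖ : 𝕜) ^ (2:ℕ) = ((‖v n j‖ ^ (2:ℕ) : ℝ) : 𝕜) := by push_cast; ring
      rw [h2, ← RCLike.ofReal_mul]
      congr 1
      rw [← Real.rpow_natCast ‖v n j‖ 2, ← Real.rpow_add h0]
      congr 1
      push_cast
      ring
  set z : ℕ → X := fun k =>
    ((S (N k) ^ (-(p - 1) / p) : ℝ) : 𝕜) • ∑ j ∈ Finset.range (M (N k)), c (N k) j • y (N k + j)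
    with hzdef
  -- the image of z under any functional through u
  have hmap : ∀ (k : ℕ) (ψ : X →L[𝕜] 𝕜), ψ (z k) =
      ((S (N k) ^ (-(p - 1) / p) : ℝ) : 𝕜) * ∑ j ∈ Finset.range (M (N k)), c (N k) j * ψ (y (N k + j)) := by
    intro k ψ
    rw [hzdef]
    simp [map_smul, map_sum, smul_eq_mul]
  -- lower bound for ‖u (z k)‖
  have hlower : ∀ k, (r : ℝ) < ‖u (z k)‖ := by
    intro k
    have hφu : (Φ (N k)) (u (z k)) = ((S (N k) ^ (-(p - 1) / p) * S (N k) : ℝ) : 𝕜) := by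
      have h1 : u (z k) = ((S (N k) ^ (-(p - 1) / p) : ℝ) : 𝕜) •
          ∑ j ∈ Finset.range (M (N k)), c (N k) j • u (y (N k + j)) := by
        rw [hzdef]
        simp [map_smul, map_sum]
      rw [h1, map_smul, map_sum]
      simp only [map_smul, smul_eq_mul]
      have h2 : ∑ j ∈ Finset.range (M (N k)), c (N k) j * (Φ (N k)) (u (y (N k + j)))
          = ((S (N k) : ℝ) : 𝕜) := by
        have h3 : ∀ j ∈ Finset.range (M (N k)),
            c (N k) j * (Φ (N k)) (u (y (N k + j))) = ((‖v (N k) j‖ ^ p : ℝ) : 𝕜) :=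
          fun j _ => hc_mul (N k) j
        rw [Finset.sum_congr rfl h3, hSdef]
        push_cast
        ring
      rw [h2, ← RCLike.ofReal_mul]
    have hSe : S (N k) ^ (-(p - 1) / p) * S (N k) = S (N k) ^ (1 / p) := by
      nth_rewrite 2 [← Real.rpow_one (S (N k))]
      rw [← Real.rpow_add (hSpos (N k))]
      congr 1
      field_simp
      ring
    have hnormφu : ‖(Φ (N k)) (u (z k))‖ = S (N k) ^ (1 / p) := by
      rw [hφu, hSe, RCLike.norm_ofReal, abs_of_nonneg (Real.rpow_nonneg (hSpos (N k)).le _)]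
    have hrlt : (r : ℝ) < S (N k) ^ (1 / p) := by
      have h4 : ((r : ℝ) ^ p) ^ (1 / p) < S (N k) ^ (1 / p) :=
        Real.rpow_lt_rpow (by positivity) (hSlt (N k)) (by positivity)
      rwa [← Real.rpow_mul r.coe_nonneg, mul_one_div_cancel hp0.ne', Real.rpow_one] at h4
    calc (r : ℝ) < S (N k) ^ (1 / p) := hrlt
      _ = ‖(Φ (N k)) (u (z k))‖ := hnormφu.symm
      _ ≤ ‖Φ (N k)‖ * ‖u (z k)‖ := (Φ (N k)).le_opNorm _
      _ ≤ 1 * ‖u (z k)‖ := by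
          refine mul_le_mul_of_nonneg_right (hΦ (N k)) (norm_nonneg _)
      _ = ‖u (z k)‖ := one_mul _
  -- z is weakly p-summable
  have hzweak : WeaklyLpSummable 𝕜 p z := by
    intro ψ
    have hg : Summable fun i => ‖ψ (y i)‖ ^ p := hy ψ
    have hpq : (p / (p - 1)).HolderConjugate p := (Real.HolderConjugate.conjExponent hp).symm
    have hbound : ∀ k, ‖ψ (z k)‖ ^ p ≤ ∑ j ∈ Finset.range (M (N k)), ‖ψ (y (N k + j))‖ ^ p := by
      intro k
      have hA : ∑ j ∈ Finset.range (M (N k)), ‖c (N k) j‖ ^ (p / (p - 1)) = S (N k) := by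
        rw [hSdef]
        refine Finset.sum_congr rfl fun j _ => ?_
        rw [hc_norm, ← Real.rpow_mul (norm_nonneg _)]
        congr 1
        field_simp
      have hHolder : ∑ j ∈ Finset.range (M (N k)), ‖c (N k) j‖ * ‖ψ (y (N k + j))‖ ≤
          (∑ j ∈ Finset.range (M (N k)), ‖c (N k) j‖ ^ (p / (p - 1))) ^ (1 / (p / (p - 1))) *
          (∑ j ∈ Finset.range (M (N k)), ‖ψ (y (N k + j))‖ ^ p) ^ (1 / p) :=
        Real.inner_le_Lp_mul_Lq_of_nonneg _ hpq (fun _ _ => norm_nonneg _)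
          (fun _ _ => norm_nonneg _)
      set T : ℝ := ∑ j ∈ Finset.range (M (N k)), ‖ψ (y (N k + j))‖ ^ p with hT
      have hTnn : 0 ≤ T := Finset.sum_nonneg fun j _ => Real.rpow_nonneg (norm_nonneg _) _
      have hE : ‖ψ (z k)‖ ≤ T ^ (1 / p) := by
        rw [hmap k ψ, norm_mul, RCLike.norm_ofReal,
          abs_of_nonneg (Real.rpow_nonneg (hSpos (N k)).le _)]
        calc S (N k) ^ (-(p - 1) / p) * ‖∑ j ∈ Finset.range (M (N k)), c (N k) j * ψ (y (N k + j))‖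
            ≤ S (N k) ^ (-(p - 1) / p) *
              (∑ j ∈ Finset.range (M (N k)), ‖c (N k) j‖ * ‖ψ (y (N k + j))‖) := by
              refine mul_le_mul_of_nonneg_left ?_ (Real.rpow_nonneg (hSpos (N k)).le _)
              refine (norm_sum_le _ _).trans ?_
              refine le_of_eq (Finset.sum_congr rfl fun j _ => ?_)
              rw [norm_mul]
          _ ≤ S (N k) ^ (-(p - 1) / p) * (S (N k) ^ (1 / (p / (p - 1))) * T ^ (1 / p)) := by
              refine mul_le_mul_of_nonneg_left ?_ (Real.rpow_nonneg (hSpos (N k)).le _)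
              rw [← hA]
              exact hHolder
          _ = (S (N k) ^ (-(p - 1) / p) * S (N k) ^ ((p - 1) / p)) * T ^ (1 / p) := by
              rw [one_div_div]
              ring
          _ = T ^ (1 / p) := by
              rw [← Real.rpow_add (hSpos (N k))]
              have h5 : -(p - 1) / p + (p - 1) / p = 0 := by ring
              rw [h5, Real.rpow_zero, one_mul]
      calc ‖ψ (z k)‖ ^ p ≤ (T ^ (1 / p)) ^ p := Real.rpow_le_rpow (norm_nonneg _) hE hp0.le
        _ = T := by rw [← Real.rpow_mul hTnn, one_div_mul_cancel hp0.ne', Real.rpow_one]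
    have hps : ∀ K : ℕ, (∑ k ∈ Finset.range K, ∑ j ∈ Finset.range (M (N k)), ‖ψ (y (N k + j))‖ ^ p)
        = ∑ i ∈ Finset.range (N K), ‖ψ (y i)‖ ^ p := by
      intro K
      induction K with
      | zero => simp [hN0]
      | succ K ih => rw [Finset.sum_range_succ, ih, hN K, Finset.sum_range_add]
    refine summable_of_sum_range_le (c := ∑' i, ‖ψ (y i)‖ ^ p)
      (fun k => Real.rpow_nonneg (norm_nonneg _) _) (fun K => ?_)
    calc ∑ k ∈ Finset.range K, ‖ψ (z k)‖ ^ p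
        ≤ ∑ k ∈ Finset.range K, ∑ j ∈ Finset.range (M (N k)), ‖ψ (y (N k + j))‖ ^ p :=
          Finset.sum_le_sum fun k _ => hbound k
      _ = ∑ i ∈ Finset.range (N K), ‖ψ (y i)‖ ^ p := hps K
      _ ≤ ∑' i, ‖ψ (y i)‖ ^ p :=
          Summable.sum_le_tsum _ (fun i _ => Real.rpow_nonneg (norm_nonneg _) _) hg
  have htend := h z hzweak
  have hev : ∀ᶠ k in atTop, ‖u (z k)‖ < (r:ℝ) := htend.eventually (gt_mem_nhds hrR)
  obtain ⟨k, hk⟩ := hev.exists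
  exact absurd (hlower k) (not_lt.mpr hk.le)

/-- For a bounded operator `u : ℓ_{p*} → F` (`1 < p < ∞`,
`p* = p/(p-1)`), the following are equivalent: (i) `‖u(y_j)‖ → 0` for every weakly
`p`-summable `(y_j)` in `ℓ_{p*}`; (ii) `(u(y_j))_j` is unconditionally `p`-summable
for every weakly `p`-summable `(y_j)` in `ℓ_{p*}`. -/
theorem stmt_12 {𝕜 : Type*} [RCLike 𝕜] {F : Type*} [NormedAddCommGroup F] [NormedSpace 𝕜 F]
    [CompleteSpace F] {p : ℝ} (hp : 1 < p) [Fact (1 ≤ ENNReal.ofReal (p / (p - 1)))]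
    (u : lp (fun _ : ℕ => 𝕜) (ENNReal.ofReal (p / (p - 1))) →L[𝕜] F) :
    (∀ y : ℕ → lp (fun _ : ℕ => 𝕜) (ENNReal.ofReal (p / (p - 1))),
        WeaklyLpSummable 𝕜 p y → Tendsto (fun j => ‖u (y j)‖) atTop (𝓝 0)) ↔
    (∀ y : ℕ → lp (fun _ : ℕ => 𝕜) (ENNReal.ofReal (p / (p - 1))),
        WeaklyLpSummable 𝕜 p y → UncondLpSummable 𝕜 p fun j => u (y j)) := by
  constructor
  · intro h y hy
    exact hard_direction hp u h y hy
  · intro h y hy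
    exact tendsto_norm_of_tail (𝕜 := 𝕜) (lt_trans one_pos hp) _ (h y hy).2
end

section
/- Let E be a Banach space, 1 < p < ∞ and p* = p/(p−1). For a bounded linear operator u : ℓ_{p*} → E, the sequence (u(e_j))_{j=1}^∞ is mid p-summable in E if and only if for every weakly p-summable sequence (y_j)_{j=1}^∞ in ℓ_{p*} the sequence (u(y_j))_{j=1}^∞ is mid p-summable in E; and in this case ‖(u(e_j))_{j=1}^∞‖_{mid,p} = sup { ‖(u(y_j))_{j=1}^∞‖_{mid,p} : (y_j)_{j=1}^∞ weakly p-summable in ℓ_{p*} with ‖(y_j)‖_{w,p} ≤ 1 }. -/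
open Filter Topology
open scoped ENNReal NNReal

section aux

variable {𝕜 : Type*} [RCLike 𝕜] {X : Type*} [NormedAddCommGroup X] [NormedSpace 𝕜 X]

lemma aux_le_weakLpNorm (p : ℝ) (x : ℕ → X) {φ : X →L[𝕜] 𝕜} (hφ : ‖φ‖ ≤ 1) :
    (∑' j, (‖φ (x j)‖₊ : ℝ≥0∞) ^ p) ^ (1 / p) ≤ weakLpNorm 𝕜 p x :=
  le_iSup₂ (f := fun (φ : X →L[𝕜] 𝕜) (_ : φ ∈ {φ : X →L[𝕜] 𝕜 | ‖φ‖ ≤ 1}) =>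
    (∑' j, (‖φ (x j)‖₊ : ℝ≥0∞) ^ p) ^ (1 / p)) φ hφ

lemma aux_weakLpNorm_le {p : ℝ} {x : ℕ → X} {C : ℝ≥0∞}
    (h : ∀ φ : X →L[𝕜] 𝕜, ‖φ‖ ≤ 1 → (∑' j, (‖φ (x j)‖₊ : ℝ≥0∞) ^ p) ^ (1 / p) ≤ C) :
    weakLpNorm 𝕜 p x ≤ C := iSup₂_le h

lemma aux_le_midLpNorm (p : ℝ) (x : ℕ → X) {φ : ℕ → X →L[𝕜] 𝕜}
    (hφ : WeaklyLpSummable 𝕜 p φ ∧ weakLpNorm 𝕜 p φ ≤ 1) :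
    (∑' n, ∑' j, (‖φ n (x j)‖₊ : ℝ≥0∞) ^ p) ^ (1 / p) ≤ midLpNorm 𝕜 p x :=
  le_iSup₂ (f := fun (φ : ℕ → X →L[𝕜] 𝕜)
    (_ : φ ∈ {φ : ℕ → X →L[𝕜] 𝕜 | WeaklyLpSummable 𝕜 p φ ∧ weakLpNorm 𝕜 p φ ≤ 1}) =>
    (∑' n, ∑' j, (‖φ n (x j)‖₊ : ℝ≥0∞) ^ p) ^ (1 / p)) φ hφ

lemma aux_midLpNorm_le {p : ℝ} {x : ℕ → X} {C : ℝ≥0∞}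
    (h : ∀ φ : ℕ → X →L[𝕜] 𝕜, WeaklyLpSummable 𝕜 p φ → weakLpNorm 𝕜 p φ ≤ 1 →
      (∑' n, ∑' j, (‖φ n (x j)‖₊ : ℝ≥0∞) ^ p) ^ (1 / p) ≤ C) :
    midLpNorm 𝕜 p x ≤ C := iSup₂_le fun φ hφ => h φ hφ.1 hφ.2

/-- Converting an `ℝ≥0∞`-valued `p`-sum of norms to a real one. -/
lemma aux_tsum_enn_eq {p : ℝ} (hp : 0 ≤ p) {Y : Type*} [NormedAddCommGroup Y] {c : ℕ → Y}
    (hs : Summable fun j => ‖c j‖ ^ p) :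
    ∑' j, (‖c j‖₊ : ℝ≥0∞) ^ p = ENNReal.ofReal (∑' j, ‖c j‖ ^ p) := by
  rw [ENNReal.ofReal_tsum_of_nonneg (fun j => Real.rpow_nonneg (norm_nonneg _) _) hs]
  refine tsum_congr fun j => ?_
  rw [← enorm_eq_nnnorm, ← ofReal_norm, ENNReal.ofReal_rpow_of_nonneg (norm_nonneg _) hp]

/-- Generalized "Fact 2": each functional contributes at most its norm times the weak norm. -/
lemma aux_A {p : ℝ} (hp : 0 < p) (y : ℕ → X) (ψ : X →L[𝕜] 𝕜) :
    ∑' j, (‖ψ (y j)‖₊ : ℝ≥0∞) ^ p ≤ (‖ψ‖₊ : ℝ≥0∞) ^ p * (weakLpNorm 𝕜 p y) ^ p := by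
  rcases eq_or_ne ψ 0 with rfl | hψ
  · simp [ENNReal.zero_rpow_of_pos hp]
  have hc : (0 : ℝ) < ‖ψ‖ := norm_pos_iff.mpr hψ
  set ψ' : X →L[𝕜] 𝕜 := (‖ψ‖⁻¹ : ℝ) • ψ with hψ'def
  have hψ'norm : ‖ψ'‖ ≤ 1 := by
    rw [hψ'def]
    rw [norm_smul ((‖ψ‖)⁻¹ : ℝ) ψ, norm_inv, Real.norm_of_nonneg hc.le,
      inv_mul_cancel₀ hc.ne']
  have hkey : ∀ j, (‖ψ (y j)‖₊ : ℝ≥0∞) = (‖ψ‖₊ : ℝ≥0∞) * (‖ψ' (y j)‖₊ : ℝ≥0∞) := by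
    intro j
    have : ‖ψ' (y j)‖₊ = ‖ψ‖₊⁻¹ * ‖ψ (y j)‖₊ := by
      rw [hψ'def, ContinuousLinearMap.smul_apply, nnnorm_smul, nnnorm_inv, nnnorm_norm]
    have h2 : ‖ψ‖₊ * ‖ψ' (y j)‖₊ = ‖ψ (y j)‖₊ := by
      rw [this, ← mul_assoc, mul_inv_cancel₀ (by simpa using hc.ne'), one_mul]
    rw [← h2, ENNReal.coe_mul]
  have hsum : ∑' j, (‖ψ' (y j)‖₊ : ℝ≥0∞) ^ p ≤ (weakLpNorm 𝕜 p y) ^ p := by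
    have h := aux_le_weakLpNorm (𝕜 := 𝕜) p y hψ'norm
    rw [one_div] at h
    exact (ENNReal.rpow_inv_le_iff hp).mp h
  calc ∑' j, (‖ψ (y j)‖₊ : ℝ≥0∞) ^ p
      = ∑' j, ((‖ψ‖₊ : ℝ≥0∞) ^ p * (‖ψ' (y j)‖₊ : ℝ≥0∞) ^ p) := by
        refine tsum_congr fun j => ?_
        rw [hkey j, ENNReal.mul_rpow_of_nonneg _ _ hp.le]
    _ = (‖ψ‖₊ : ℝ≥0∞) ^ p * ∑' j, (‖ψ' (y j)‖₊ : ℝ≥0∞) ^ p := ENNReal.tsum_mul_left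
    _ ≤ (‖ψ‖₊ : ℝ≥0∞) ^ p * (weakLpNorm 𝕜 p y) ^ p := mul_le_mul_right hsum _

end aux

section lpq

variable {𝕜 : Type*} [RCLike 𝕜]

lemma aux_conj {p : ℝ} (hp : 1 < p) : p.HolderConjugate (p / (p - 1)) :=
  Real.HolderConjugate.conjExponent hp

lemma aux_B1 {p : ℝ} (hp : 1 < p) [Fact (1 ≤ ENNReal.ofReal (p / (p - 1)))]
    (ψ : lp (fun _ : ℕ => 𝕜) (ENNReal.ofReal (p / (p - 1))) →L[𝕜] 𝕜) (s : Finset ℕ) :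
    ∑ j ∈ s, ‖ψ (lp.single (ENNReal.ofReal (p / (p - 1))) j 1)‖ ^ p ≤ ‖ψ‖ ^ p := by
  have hpq := aux_conj hp
  have hp0 : (0:ℝ) < p := hpq.pos
  set q' : ℝ := p / (p - 1) with hq'
  have hq'pos : 0 < q' := hpq.symm.pos
  have htr : (ENNReal.ofReal q').toReal = q' := ENNReal.toReal_ofReal hq'pos.le
  set a : ℕ → 𝕜 := fun j => ψ (lp.single (ENNReal.ofReal q') j 1) with ha
  set b : ℕ → 𝕜 := fun j => (starRingEnd 𝕜) (a j) * ((‖a j‖ ^ (p - 2) : ℝ) : 𝕜) with hb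
  have hba : ∀ j, b j * a j = ((‖a j‖ ^ p : ℝ) : 𝕜) := by
    intro j
    rcases eq_or_ne (a j) 0 with h0 | h0
    · rw [hb]; simp [h0, Real.zero_rpow hp0.ne']
    · have hna : (0:ℝ) < ‖a j‖ := norm_pos_iff.mpr h0
      rw [hb]
      calc (starRingEnd 𝕜) (a j) * ((‖a j‖ ^ (p - 2) : ℝ) : 𝕜) * a j
          = ((starRingEnd 𝕜) (a j) * a j) * ((‖a j‖ ^ (p - 2) : ℝ) : 𝕜) := by ring
        _ = ((‖a j‖ ^ (2:ℕ) * ‖a j‖ ^ (p - 2) : ℝ) : 𝕜) := by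
            rw [RCLike.conj_mul]; push_cast; ring
        _ = ((‖a j‖ ^ p : ℝ) : 𝕜) := by
            congr 1
            rw [← Real.rpow_natCast ‖a j‖ 2, ← Real.rpow_add hna]
            norm_num
  have hnb : ∀ j, ‖b j‖ = ‖a j‖ ^ (p - 1) := by
    intro j
    rcases eq_or_ne (a j) 0 with h0 | h0
    · rw [hb]; simp [h0, Real.zero_rpow (by linarith : p - 1 ≠ 0)]
    · have hna : (0:ℝ) < ‖a j‖ := norm_pos_iff.mpr h0
      rw [hb, norm_mul, RCLike.norm_conj, RCLike.norm_ofReal,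
        abs_of_nonneg (Real.rpow_nonneg (norm_nonneg _) _)]
      nth_rewrite 1 [← Real.rpow_one ‖a j‖]
      rw [← Real.rpow_add hna]
      congr 1
      ring
  set x := ∑ j ∈ s, lp.single (ENNReal.ofReal q') j (b j) with hx
  have hxnorm : ‖x‖ ^ q' = ∑ j ∈ s, ‖b j‖ ^ q' := by
    have h := lp.norm_sum_single (p := ENNReal.ofReal q') (by rw [htr]; exact hq'pos) b s
    rw [htr] at h
    exact h
  have hψx : ψ x = ((∑ j ∈ s, ‖a j‖ ^ p : ℝ) : 𝕜) := by
    rw [hx, map_sum ψ (fun j => lp.single (ENNReal.ofReal q') j (b j)) s, RCLike.ofReal_sum]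
    refine Finset.sum_congr rfl fun j _ => ?_
    have hsingle : lp.single (E := fun _ : ℕ => 𝕜) (ENNReal.ofReal q') j (b j)
        = b j • lp.single (E := fun _ : ℕ => 𝕜) (ENNReal.ofReal q') j 1 := by
      have h := lp.single_smul (E := fun _ : ℕ => 𝕜) (ENNReal.ofReal q') j (b j) (1 : 𝕜)
      rwa [smul_eq_mul, mul_one] at h
    rw [hsingle, map_smul, smul_eq_mul]
    exact hba j
  set A := ∑ j ∈ s, ‖a j‖ ^ p with hA
  have hAnn : 0 ≤ A := Finset.sum_nonneg fun j _ => Real.rpow_nonneg (norm_nonneg _) _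
  have hxA : ‖x‖ ^ q' = A := by
    rw [hxnorm, hA]
    refine Finset.sum_congr rfl fun j _ => ?_
    rw [hnb j, ← Real.rpow_mul (norm_nonneg _)]
    congr 1
    rw [hq']
    field_simp
    exact div_self (by linarith : p - 1 ≠ 0)
  have hbound : A ≤ ‖ψ‖ * ‖x‖ := by
    calc A = ‖ψ x‖ := by rw [hψx, RCLike.norm_ofReal, abs_of_nonneg hAnn]
      _ ≤ ‖ψ‖ * ‖x‖ := ψ.le_opNorm x
  show A ≤ ‖ψ‖ ^ p
  rcases eq_or_lt_of_le hAnn with h0 | hApos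
  · rw [← h0]; exact Real.rpow_nonneg (norm_nonneg _) _
  have hxval : ‖x‖ = A ^ (1 / q') := by
    have h1 : (‖x‖ ^ q') ^ (1 / q') = A ^ (1 / q') := by rw [hxA]
    rwa [← Real.rpow_mul (norm_nonneg x), mul_one_div_cancel hq'pos.ne', Real.rpow_one] at h1
  have hA1 : A ^ (1 / p) * A ^ (1 / q') = A := by
    rw [← Real.rpow_add hApos]
    rw [show 1 / p + 1 / q' = 1 by
      rw [one_div, one_div]; exact hpq.inv_add_inv_eq_one]
    exact Real.rpow_one A
  have hApq : A ^ (1 / p) ≤ ‖ψ‖ := by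
    have hpos : 0 < A ^ (1 / q') := Real.rpow_pos_of_pos hApos _
    have h3 : A ^ (1 / p) * A ^ (1 / q') ≤ ‖ψ‖ * A ^ (1 / q') := by
      rw [hA1, ← hxval]; exact hbound
    exact le_of_mul_le_mul_right h3 hpos
  calc A = (A ^ (1 / p)) ^ p := by
        rw [← Real.rpow_mul hAnn, one_div_mul_cancel hp0.ne', Real.rpow_one]
    _ ≤ ‖ψ‖ ^ p := Real.rpow_le_rpow (Real.rpow_nonneg hAnn _) hApq hp0.le

end lpq

section lpq2

variable {𝕜 : Type*} [RCLike 𝕜] {p : ℝ}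

lemma aux_B2 (hp : 1 < p) [Fact (1 ≤ ENNReal.ofReal (p / (p - 1)))]
    (ψ : lp (fun _ : ℕ => 𝕜) (ENNReal.ofReal (p / (p - 1))) →L[𝕜] 𝕜) :
    Summable fun j => ‖ψ (lp.single (ENNReal.ofReal (p / (p - 1))) j 1)‖ ^ p :=
  summable_of_sum_le (fun j => Real.rpow_nonneg (norm_nonneg _) _) (aux_B1 hp ψ)

lemma aux_B3 (hp : 1 < p) [Fact (1 ≤ ENNReal.ofReal (p / (p - 1)))]
    (ψ : lp (fun _ : ℕ => 𝕜) (ENNReal.ofReal (p / (p - 1))) →L[𝕜] 𝕜) :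
    ∑' j, (‖ψ (lp.single (ENNReal.ofReal (p / (p - 1))) j 1)‖₊ : ℝ≥0∞) ^ p
      ≤ (‖ψ‖₊ : ℝ≥0∞) ^ p := by
  have hp0 : (0:ℝ) < p := lt_trans one_pos hp
  rw [aux_tsum_enn_eq hp0.le (aux_B2 hp ψ)]
  have h1 : ∑' j, ‖ψ (lp.single (ENNReal.ofReal (p / (p - 1))) j 1)‖ ^ p ≤ ‖ψ‖ ^ p :=
    Summable.tsum_le_of_sum_le (aux_B2 hp ψ) (aux_B1 hp ψ)
  calc ENNReal.ofReal (∑' j, ‖ψ (lp.single (ENNReal.ofReal (p / (p - 1))) j 1)‖ ^ p)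
      ≤ ENNReal.ofReal (‖ψ‖ ^ p) := ENNReal.ofReal_le_ofReal h1
    _ = (‖ψ‖₊ : ℝ≥0∞) ^ p := by
        rw [← ENNReal.ofReal_rpow_of_nonneg (norm_nonneg _) hp0.le, ofReal_norm, enorm_eq_nnnorm]

lemma aux_B4 (hp : 1 < p) [Fact (1 ≤ ENNReal.ofReal (p / (p - 1)))] :
    weakLpNorm 𝕜 p (fun j => lp.single (E := fun _ : ℕ => 𝕜)
      (ENNReal.ofReal (p / (p - 1))) j 1) ≤ 1 := by
  have hp0 : (0:ℝ) < p := lt_trans one_pos hp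
  refine aux_weakLpNorm_le fun ψ hψ => ?_
  calc (∑' j, (‖ψ (lp.single (ENNReal.ofReal (p / (p - 1))) j 1)‖₊ : ℝ≥0∞) ^ p) ^ (1 / p)
      ≤ ((‖ψ‖₊ : ℝ≥0∞) ^ p) ^ (1 / p) :=
        ENNReal.rpow_le_rpow (aux_B3 hp ψ) (by positivity)
    _ = (‖ψ‖₊ : ℝ≥0∞) := by
        rw [← ENNReal.rpow_mul, mul_one_div_cancel hp0.ne', ENNReal.rpow_one]
    _ ≤ 1 := by
        rw [← ENNReal.coe_one, ENNReal.coe_le_coe]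
        exact_mod_cast hψ

lemma aux_C (hp : 1 < p) [Fact (1 ≤ ENNReal.ofReal (p / (p - 1)))]
    (ψ : lp (fun _ : ℕ => 𝕜) (ENNReal.ofReal (p / (p - 1))) →L[𝕜] 𝕜) :
    (‖ψ‖₊ : ℝ≥0∞) ^ p
      ≤ ∑' j, (‖ψ (lp.single (ENNReal.ofReal (p / (p - 1))) j 1)‖₊ : ℝ≥0∞) ^ p := by
  have hpq := aux_conj hp
  have hp0 : (0:ℝ) < p := hpq.pos
  haveI : Fact (1 ≤ ENNReal.ofReal p) :=
    ⟨by rw [← ENNReal.ofReal_one]; exact ENNReal.ofReal_le_ofReal hp.le⟩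
  set a : ℕ → 𝕜 := fun j => ψ (lp.single (ENNReal.ofReal (p / (p - 1))) j 1) with ha
  have hsum : Summable fun j => ‖a j‖ ^ p := aux_B2 hp ψ
  have htrp : (ENNReal.ofReal p).toReal = p := ENNReal.toReal_ofReal hp0.le
  have hq'pos : (0:ℝ) < p / (p - 1) := hpq.symm.pos
  have htrq : (ENNReal.ofReal (p / (p - 1))).toReal = p / (p - 1) :=
    ENNReal.toReal_ofReal hq'pos.le
  set g : lp (fun _ : ℕ => 𝕜) (ENNReal.ofReal p) :=
    ⟨a, memℓp_gen (by rw [htrp]; exact hsum)⟩ with hg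
  have hsumnn : (0:ℝ) ≤ ∑' j, ‖a j‖ ^ p :=
    tsum_nonneg fun j => Real.rpow_nonneg (norm_nonneg _) _
  have hgnorm : ‖g‖ = (∑' j, ‖a j‖ ^ p) ^ (1 / p) := by
    have h := lp.norm_eq_tsum_rpow (by rw [htrp]; exact hp0) g
    rw [htrp] at h
    exact h
  have hreal : ‖ψ‖ ≤ (∑' j, ‖a j‖ ^ p) ^ (1 / p) := by
    refine ContinuousLinearMap.opNorm_le_bound ψ (Real.rpow_nonneg hsumnn _) fun b => ?_
    have hb : HasSum (fun j => lp.single (ENNReal.ofReal (p / (p - 1))) j (b j)) b :=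
      lp.hasSum_single ENNReal.ofReal_ne_top b
    have hψb : HasSum (fun j => b j * a j) (ψ b) := by
      have h1 := hb.mapL ψ
      have h2 : ∀ j, ψ (lp.single (ENNReal.ofReal (p / (p - 1))) j (b j)) = b j * a j := by
        intro j
        have hsingle : lp.single (E := fun _ : ℕ => 𝕜) (ENNReal.ofReal (p / (p - 1))) j (b j)
            = b j • lp.single (E := fun _ : ℕ => 𝕜) (ENNReal.ofReal (p / (p - 1))) j 1 := by
          have h := lp.single_smul (E := fun _ : ℕ => 𝕜)
            (ENNReal.ofReal (p / (p - 1))) j (b j) (1 : 𝕜)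
          rwa [smul_eq_mul, mul_one] at h
        rw [hsingle, map_smul, smul_eq_mul]
      simpa only [h2] using h1
    have hconj : (ENNReal.ofReal (p / (p - 1))).toReal.HolderConjugate
        (ENNReal.ofReal p).toReal := by
      rw [htrq, htrp]; exact hpq.symm
    have hga : ∀ j, (g : ∀ _ : ℕ, 𝕜) j = a j := fun j => rfl
    have hsummul := lp.summable_mul hconj b g
    have hmul := lp.tsum_mul_le_mul_norm' hconj b g
    simp only [hga] at hsummul hmul
    rw [← hψb.tsum_eq]
    calc ‖∑' j, b j * a j‖ ≤ ∑' j, ‖b j * a j‖ := by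
          refine norm_tsum_le_tsum_norm ?_
          simpa only [norm_mul] using hsummul
      _ = ∑' j, ‖b j‖ * ‖a j‖ := by simp only [norm_mul]
      _ ≤ ‖b‖ * ‖g‖ := hmul
      _ = (∑' j, ‖a j‖ ^ p) ^ (1 / p) * ‖b‖ := by rw [hgnorm]; ring
  rw [aux_tsum_enn_eq hp0.le hsum]
  have h2 : ‖ψ‖ ^ p ≤ ∑' j, ‖a j‖ ^ p := by
    calc ‖ψ‖ ^ p ≤ ((∑' j, ‖a j‖ ^ p) ^ (1 / p)) ^ p :=
          Real.rpow_le_rpow (norm_nonneg _) hreal hp0.le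
      _ = ∑' j, ‖a j‖ ^ p := by
          rw [← Real.rpow_mul hsumnn, one_div_mul_cancel hp0.ne', Real.rpow_one]
  calc (‖ψ‖₊ : ℝ≥0∞) ^ p = ENNReal.ofReal (‖ψ‖ ^ p) := by
        rw [← ENNReal.ofReal_rpow_of_nonneg (norm_nonneg _) hp0.le, ofReal_norm, enorm_eq_nnnorm]
    _ ≤ ENNReal.ofReal (∑' j, ‖a j‖ ^ p) := ENNReal.ofReal_le_ofReal h2

end lpq2

section ub

variable {𝕜 : Type*} [RCLike 𝕜] {X : Type*} [NormedAddCommGroup X] [NormedSpace 𝕜 X]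

lemma aux_D {p : ℝ} (hp : 1 < p) {y : ℕ → X} (hy : WeaklyLpSummable 𝕜 p y) :
    weakLpNorm 𝕜 p y < ⊤ := by
  have hp0 : (0:ℝ) < p := lt_trans one_pos hp
  haveI : Fact (1 ≤ ENNReal.ofReal p) :=
    ⟨by rw [← ENNReal.ofReal_one]; exact ENNReal.ofReal_le_ofReal hp.le⟩
  have htrp : (ENNReal.ofReal p).toReal = p := ENNReal.toReal_ofReal hp0.le
  have hpne0 : (ENNReal.ofReal p) ≠ 0 := (ENNReal.ofReal_pos.mpr hp0).ne'
  let T : (X →L[𝕜] 𝕜) →ₗ[𝕜] lp (fun _ : ℕ => 𝕜) (ENNReal.ofReal p) :=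
    { toFun := fun ψ => ⟨fun j => ψ (y j), memℓp_gen (by rw [htrp]; exact hy ψ)⟩
      map_add' := fun ψ φ => lp.ext (funext fun j => rfl)
      map_smul' := fun c ψ => lp.ext (funext fun j => rfl) }
  have hcont : Continuous T := by
    apply T.continuous_of_seq_closed_graph
    intro v ψ z hv hvz
    apply lp.ext
    funext j
    have h1 : Filter.Tendsto (fun k => (T (v k) : ∀ _ : ℕ, 𝕜) j) atTop (𝓝 (z j)) := by
      rw [tendsto_iff_norm_sub_tendsto_zero]
      have hev : ∀ k, ‖(T (v k) : ∀ _ : ℕ, 𝕜) j - z j‖ ≤ ‖(T ∘ v) k - z‖ := by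
        intro k
        have h := lp.norm_apply_le_norm hpne0 ((T ∘ v) k - z) j
        simpa using h
      have hz : Filter.Tendsto (fun k => ‖(T ∘ v) k - z‖) atTop (𝓝 0) := by
        rw [← tendsto_iff_norm_sub_tendsto_zero]
        exact hvz
      exact squeeze_zero (fun k => norm_nonneg _) hev hz
    have h2 : Filter.Tendsto (fun k => (T (v k) : ∀ _ : ℕ, 𝕜) j) atTop (𝓝 (ψ (y j))) := by
      have := ((ContinuousLinearMap.apply 𝕜 𝕜 (y j)).continuous.tendsto ψ).comp hv
      exact this
    exact tendsto_nhds_unique h1 h2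
  let T' : (X →L[𝕜] 𝕜) →L[𝕜] lp (fun _ : ℕ => 𝕜) (ENNReal.ofReal p) := ⟨T, hcont⟩
  have hbound : weakLpNorm 𝕜 p y ≤ ENNReal.ofReal ‖T'‖ := by
    refine aux_weakLpNorm_le fun ψ hψ => ?_
    rw [aux_tsum_enn_eq hp0.le (hy ψ)]
    have hsumnn : (0:ℝ) ≤ ∑' j, ‖ψ (y j)‖ ^ p :=
      tsum_nonneg fun j => Real.rpow_nonneg (norm_nonneg _) _
    have hnorm : (∑' j, ‖ψ (y j)‖ ^ p) ^ (1 / p) = ‖T' ψ‖ := by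
      have h := lp.norm_eq_tsum_rpow (by rw [htrp]; exact hp0) (T' ψ)
      rw [htrp] at h
      exact h.symm
    rw [ENNReal.ofReal_rpow_of_nonneg hsumnn (by positivity), hnorm]
    exact ENNReal.ofReal_le_ofReal
      ((T'.le_opNorm ψ).trans (mul_le_of_le_one_right (norm_nonneg _) hψ))
  exact lt_of_le_of_lt hbound ENNReal.ofReal_lt_top

end ub

section main

variable {𝕜 : Type*} [RCLike 𝕜] {E : Type*} [NormedAddCommGroup E] [NormedSpace 𝕜 E]

lemma aux_E {p : ℝ} (hp : 1 < p) [Fact (1 ≤ ENNReal.ofReal (p / (p - 1)))]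
    (u : lp (fun _ : ℕ => 𝕜) (ENNReal.ofReal (p / (p - 1))) →L[𝕜] E)
    (y : ℕ → lp (fun _ : ℕ => 𝕜) (ENNReal.ofReal (p / (p - 1)))) :
    midLpNorm 𝕜 p (fun j => u (y j)) ≤ weakLpNorm 𝕜 p y *
      midLpNorm 𝕜 p (fun j => u (lp.single (ENNReal.ofReal (p / (p - 1))) j 1)) := by
  have hp0 : (0:ℝ) < p := lt_trans one_pos hp
  set M := midLpNorm 𝕜 p (fun j => u (lp.single (ENNReal.ofReal (p / (p - 1))) j 1)) with hM
  set W := weakLpNorm 𝕜 p y with hW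
  refine aux_midLpNorm_le fun φ hφ1 hφ2 => ?_
  have hmain : ∑' n, ∑' j, (‖φ n (u (y j))‖₊ : ℝ≥0∞) ^ p ≤ M ^ p * W ^ p := by
    have step1 : ∀ n, ∑' j, (‖φ n (u (y j))‖₊ : ℝ≥0∞) ^ p ≤
        (‖(φ n).comp u‖₊ : ℝ≥0∞) ^ p * W ^ p := by
      intro n
      have h := aux_A hp0 y ((φ n).comp u)
      simpa only [ContinuousLinearMap.comp_apply] using h
    calc ∑' n, ∑' j, (‖φ n (u (y j))‖₊ : ℝ≥0∞) ^ p
        ≤ ∑' n, ((‖(φ n).comp u‖₊ : ℝ≥0∞) ^ p * W ^ p) := ENNReal.tsum_le_tsum step1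
      _ = (∑' n, (‖(φ n).comp u‖₊ : ℝ≥0∞) ^ p) * W ^ p := ENNReal.tsum_mul_right
      _ ≤ (∑' n, ∑' j, (‖φ n (u (lp.single (ENNReal.ofReal (p / (p - 1))) j 1))‖₊ : ℝ≥0∞) ^ p)
            * W ^ p := by
          refine mul_le_mul_left (ENNReal.tsum_le_tsum fun n => ?_) _
          have h := aux_C hp ((φ n).comp u)
          simpa only [ContinuousLinearMap.comp_apply] using h
      _ ≤ M ^ p * W ^ p := by
          refine mul_le_mul_left ?_ _
          have h := aux_le_midLpNorm (𝕜 := 𝕜) p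
            (fun j => u (lp.single (ENNReal.ofReal (p / (p - 1))) j 1)) ⟨hφ1, hφ2⟩
          rw [one_div] at h
          exact (ENNReal.rpow_inv_le_iff hp0).mp h
  calc (∑' n, ∑' j, (‖φ n (u (y j))‖₊ : ℝ≥0∞) ^ p) ^ (1 / p)
      ≤ (M ^ p * W ^ p) ^ (1 / p) := ENNReal.rpow_le_rpow hmain (by positivity)
    _ = M * W := by
        rw [ENNReal.mul_rpow_of_nonneg _ _ (by positivity), ← ENNReal.rpow_mul,
          ← ENNReal.rpow_mul, mul_one_div_cancel hp0.ne', ENNReal.rpow_one, ENNReal.rpow_one]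
    _ = W * M := mul_comm _ _

end main


/-- For `1 < p < ∞`, `p* = p/(p-1)` and a bounded operator
`u : ℓ_{p*} → E`: `(u(e_j))_j` is mid `p`-summable iff `(u(y_j))_j` is mid `p`-summable
for every weakly `p`-summable `(y_j)` in `ℓ_{p*}`, in which case
`‖(u(e_j))_j‖_{mid,p} = sup { ‖(u(y_j))_j‖_{mid,p} : ‖(y_j)‖_{w,p} ≤ 1 }`. -/
theorem stmt_16 {𝕜 : Type*} [RCLike 𝕜] {E : Type*} [NormedAddCommGroup E] [NormedSpace 𝕜 E]
    [CompleteSpace E] {p : ℝ} (hp : 1 < p) [Fact (1 ≤ ENNReal.ofReal (p / (p - 1)))]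
    (u : lp (fun _ : ℕ => 𝕜) (ENNReal.ofReal (p / (p - 1))) →L[𝕜] E) :
    ((midLpNorm 𝕜 p fun j => u (lp.single (ENNReal.ofReal (p / (p - 1))) j 1)) < ⊤ ↔
      ∀ y : ℕ → lp (fun _ : ℕ => 𝕜) (ENNReal.ofReal (p / (p - 1))),
        WeaklyLpSummable 𝕜 p y → (midLpNorm 𝕜 p fun j => u (y j)) < ⊤) ∧
    ((midLpNorm 𝕜 p fun j => u (lp.single (ENNReal.ofReal (p / (p - 1))) j 1)) < ⊤ →
      (midLpNorm 𝕜 p fun j => u (lp.single (ENNReal.ofReal (p / (p - 1))) j 1)) =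
        ⨆ y ∈ {y : ℕ → lp (fun _ : ℕ => 𝕜) (ENNReal.ofReal (p / (p - 1))) |
            WeaklyLpSummable 𝕜 p y ∧ weakLpNorm 𝕜 p y ≤ 1},
          midLpNorm 𝕜 p fun j => u (y j)) := by
  have he_summ : WeaklyLpSummable 𝕜 p
      (fun j => lp.single (E := fun _ : ℕ => 𝕜) (ENNReal.ofReal (p / (p - 1))) j 1) :=
    fun ψ => aux_B2 hp ψ
  have he_weak : weakLpNorm 𝕜 p
      (fun j => lp.single (E := fun _ : ℕ => 𝕜) (ENNReal.ofReal (p / (p - 1))) j 1) ≤ 1 :=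
    aux_B4 hp
  constructor
  · constructor
    · intro h y hy
      exact lt_of_le_of_lt (aux_E hp u y)
        (ENNReal.mul_lt_top (aux_D hp hy) h)
    · intro h
      exact h _ he_summ
  · intro _
    apply le_antisymm
    · exact le_iSup₂ (f := fun (y : ℕ → lp (fun _ : ℕ => 𝕜) (ENNReal.ofReal (p / (p - 1))))
        (_ : y ∈ {y | WeaklyLpSummable 𝕜 p y ∧ weakLpNorm 𝕜 p y ≤ 1}) =>
          midLpNorm 𝕜 p fun j => u (y j)) _ ⟨he_summ, he_weak⟩
    · refine iSup₂_le fun y hy => ?_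
      calc midLpNorm 𝕜 p (fun j => u (y j))
          ≤ weakLpNorm 𝕜 p y *
            midLpNorm 𝕜 p (fun j => u (lp.single (ENNReal.ofReal (p / (p - 1))) j 1)) :=
            aux_E hp u y
        _ ≤ 1 * midLpNorm 𝕜 p (fun j => u (lp.single (ENNReal.ofReal (p / (p - 1))) j 1)) :=
            mul_le_mul_left hy.2 _
        _ = _ := one_mul _
end
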